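/- arXiv:1607.06901 — 5 statements merged into one kernel-verified Lean document; each statement's English description precedes it below -/
import Mathlib

section
/- Every maximal congruence of a lattice L is a prime congruence of L. -/
/-- A lattice congruence: an equivalence relation compatible with `⊔` and `⊓`. -/
def IsLatCon {L : Type*} [Lattice L] (θ : L → L → Prop) : Prop :=
  Equivalence θ ∧ (∀ a b c d, θ a b → θ c d → θ (a ⊔ c) (b ⊔ d)) ∧
    (∀ a b c d, θ a b → θ c d → θ (a ⊓ c) (b ⊓ d))

/-- A maximal congruence: a maximal element of the proper congruences under inclusion. -/
def IsMaxCon {L : Type*} [Lattice L] (θ : L → L → Prop) : Prop :=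
  IsLatCon θ ∧ θ ≠ (fun _ _ => True) ∧
    ∀ φ : L → L → Prop, IsLatCon φ → (∀ a b, θ a b → φ a b) →
      φ = θ ∨ φ = (fun _ _ => True)

/-- A prime congruence: proper, and `α ∩ β ⊆ θ` implies `α ⊆ θ` or `β ⊆ θ`. -/
def IsPrimeCon {L : Type*} [Lattice L] (θ : L → L → Prop) : Prop :=
  IsLatCon θ ∧ θ ≠ (fun _ _ => True) ∧
    ∀ α β : L → L → Prop, IsLatCon α → IsLatCon β →
      (∀ a b, α a b → β a b → θ a b) →
      (∀ a b, α a b → θ a b) ∨ (∀ a b, β a b → θ a b)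

section Aux

variable {L : Type*} [Lattice L] {γ : L → L → Prop}

/-- From `γ (a ⊓ b) (a ⊔ b)` deduce `γ a b`. -/
lemma latCon_of_inf_sup (hγ : IsLatCon γ) {a b : L}
    (h : γ (a ⊓ b) (a ⊔ b)) : γ a b := by
  obtain ⟨he, _, hm⟩ := hγ
  have h1 : γ ((a ⊓ b) ⊓ a) ((a ⊔ b) ⊓ a) := hm _ _ _ _ h (he.refl a)
  have h2 : γ ((a ⊓ b) ⊓ b) ((a ⊔ b) ⊓ b) := hm _ _ _ _ h (he.refl b)
  have e1 : (a ⊓ b) ⊓ a = a ⊓ b := inf_eq_left.mpr inf_le_left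
  have e2 : (a ⊔ b) ⊓ a = a := inf_eq_right.mpr le_sup_left
  have e3 : (a ⊓ b) ⊓ b = a ⊓ b := inf_eq_left.mpr inf_le_right
  have e4 : (a ⊔ b) ⊓ b = b := inf_eq_right.mpr le_sup_right
  rw [e1, e2] at h1
  rw [e3, e4] at h2
  exact he.trans (he.symm h1) h2

/-- From `γ a b` deduce `γ (a ⊓ b) (a ⊔ b)`. -/
lemma latCon_inf_sup (hγ : IsLatCon γ) {a b : L}
    (h : γ a b) : γ (a ⊓ b) (a ⊔ b) := by
  obtain ⟨he, hj, hm⟩ := hγ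
  have h1 : γ (a ⊓ b) (b ⊓ b) := hm _ _ _ _ h (he.refl b)
  have h2 : γ (a ⊔ b) (b ⊔ b) := hj _ _ _ _ h (he.refl b)
  rw [inf_idem] at h1
  rw [sup_idem] at h2
  exact he.trans h1 (he.symm h2)

/-- Interval lemma: if `γ x y` and `a, b` both lie between `x` and `y`, then `γ a b`. -/
lemma latCon_interval (hγ : IsLatCon γ) {x y a b : L}
    (h : γ x y) (hxa : x ≤ a) (hay : a ≤ y) (hxb : x ≤ b) (hby : b ≤ y) :
    γ a b := by
  obtain ⟨he, hj, _⟩ := hγ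
  have h1 : γ (x ⊔ a) (y ⊔ a) := hj _ _ _ _ h (he.refl a)
  have h2 : γ (x ⊔ b) (y ⊔ b) := hj _ _ _ _ h (he.refl b)
  rw [sup_eq_right.mpr hxa, sup_eq_left.mpr hay] at h1
  rw [sup_eq_right.mpr hxb, sup_eq_left.mpr hby] at h2
  exact he.trans h1 (he.symm h2)

/-- The transitive closure of the union of two congruences is a congruence. -/
lemma isLatCon_transGen_union {θ β : L → L → Prop}
    (hθ : IsLatCon θ) (hβ : IsLatCon β) :
    IsLatCon (Relation.TransGen (fun a b => θ a b ∨ β a b)) := by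
  set s : L → L → Prop := fun a b => θ a b ∨ β a b with hs
  have hsymm : ∀ a b, s a b → s b a := fun a b h =>
    h.elim (fun h => Or.inl (hθ.1.symm h)) (fun h => Or.inr (hβ.1.symm h))
  have hsupc : ∀ c a b, s a b → s (a ⊔ c) (b ⊔ c) := fun c a b h =>
    h.elim (fun h => Or.inl (hθ.2.1 _ _ _ _ h (hθ.1.refl c)))
      (fun h => Or.inr (hβ.2.1 _ _ _ _ h (hβ.1.refl c)))
  have hinfc : ∀ c a b, s a b → s (a ⊓ c) (b ⊓ c) := fun c a b h =>
    h.elim (fun h => Or.inl (hθ.2.2 _ _ _ _ h (hθ.1.refl c)))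
      (fun h => Or.inr (hβ.2.2 _ _ _ _ h (hβ.1.refl c)))
  have hsupc' : ∀ c a b, s a b → s (c ⊔ a) (c ⊔ b) := fun c a b h => by
    rw [sup_comm c a, sup_comm c b]; exact hsupc c a b h
  have hinfc' : ∀ c a b, s a b → s (c ⊓ a) (c ⊓ b) := fun c a b h => by
    rw [inf_comm c a, inf_comm c b]; exact hinfc c a b h
  refine ⟨⟨fun a => Relation.TransGen.single (Or.inl (hθ.1.refl a)), ?_,
      fun h1 h2 => Relation.TransGen.trans h1 h2⟩, ?_, ?_⟩
  · intro a b h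
    induction h with
    | single h => exact Relation.TransGen.single (hsymm _ _ h)
    | tail _ h ih => exact Relation.TransGen.trans (Relation.TransGen.single (hsymm _ _ h)) ih
  · intro a b c d h1 h2
    have step1 : Relation.TransGen s (a ⊔ c) (b ⊔ c) :=
      Relation.TransGen.lift (p := s) (fun t => t ⊔ c) (fun u v h => hsupc c u v h) _ _ h1
    have step2 : Relation.TransGen s (b ⊔ c) (b ⊔ d) :=
      Relation.TransGen.lift (p := s) (fun t => b ⊔ t) (fun u v h => hsupc' b u v h) _ _ h2
    exact step1.trans step2
  · intro a b c d h1 h2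
    have step1 : Relation.TransGen s (a ⊓ c) (b ⊓ c) :=
      Relation.TransGen.lift (p := s) (fun t => t ⊓ c) (fun u v h => hinfc c u v h) _ _ h1
    have step2 : Relation.TransGen s (b ⊓ c) (b ⊓ d) :=
      Relation.TransGen.lift (p := s) (fun t => b ⊓ t) (fun u v h => hinfc' b u v h) _ _ h2
    exact step1.trans step2

omit [Lattice L] in
lemma transGen_imp {θ t : L → L → Prop} (he : Equivalence θ)
    (h : ∀ u v, t u v → θ u v) {a b : L} (htg : Relation.TransGen t a b) : θ a b := by
  induction htg with
  | single h' => exact h _ _ h'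
  | tail _ h' ih => exact he.trans ih (h _ _ h')

end Aux

/-- Every maximal congruence of a lattice is prime. -/
theorem isPrimeCon_of_isMaxCon {L : Type*} [Lattice L] (θ : L → L → Prop)
    (hθ : IsMaxCon θ) : IsPrimeCon θ := by
  obtain ⟨hcon, hproper, hmax⟩ := hθ
  refine ⟨hcon, hproper, ?_⟩
  intro α β hα hβ hαβ
  by_contra hcontra
  push_neg at hcontra
  obtain ⟨⟨a₀, b₀, hαa, hnθa⟩, ⟨c₀, d₀, hβc, hnθc⟩⟩ := hcontra
  -- the join θ ∨ β : transitive closure of the union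
  set s : L → L → Prop := fun a b => θ a b ∨ β a b with hs
  have hJ : IsLatCon (Relation.TransGen s) := isLatCon_transGen_union hcon hβ
  -- by maximality, the join is everything
  have hJtot : ∀ x y : L, Relation.TransGen s x y := by
    rcases hmax _ hJ (fun a b h => Relation.TransGen.single (Or.inl h)) with h | h
    · exfalso
      exact hnθc (by rw [← h]; exact Relation.TransGen.single (Or.inr hβc))
    · intro x y
      rw [h]
      trivial
  -- claim: α ⊆ θ, contradiction
  apply hnθa
  apply latCon_of_inf_sup hcon
  set x := a₀ ⊓ b₀
  set y := a₀ ⊔ b₀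
  have hxy : x ≤ y := inf_le_sup
  have hαxy : α x y := latCon_inf_sup hα hαa
  -- squeeze a transitive-closure chain from x to y into the interval [x, y]
  set s' : L → L → Prop := fun a b =>
    (θ a b ∨ β a b) ∧ x ≤ a ∧ a ≤ y ∧ x ≤ b ∧ b ≤ y with hs'
  have hchain : Relation.TransGen s' x y := by
    have key : ∀ u v, s u v → s' ((u ⊔ x) ⊓ y) ((v ⊔ x) ⊓ y) := by
      intro u v h
      refine ⟨?_, le_inf le_sup_right hxy, inf_le_right,
        le_inf le_sup_right hxy, inf_le_right⟩
      rcases h with h | h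
      · exact Or.inl (hcon.2.2 _ _ _ _ (hcon.2.1 _ _ _ _ h (hcon.1.refl x)) (hcon.1.refl y))
      · exact Or.inr (hβ.2.2 _ _ _ _ (hβ.2.1 _ _ _ _ h (hβ.1.refl x)) (hβ.1.refl y))
    have := Relation.TransGen.lift (p := s') (fun t => (t ⊔ x) ⊓ y) key _ _ (hJtot x y)
    simpa [Function.onFun, sup_eq_left.mpr le_rfl, inf_eq_left.mpr hxy, sup_eq_left.mpr hxy] using this
  -- each step of the squeezed chain is in θ
  refine transGen_imp hcon.1 ?_ hchain
  rintro u v ⟨h, hxu, huy, hxv, hvy⟩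
  rcases h with h | h
  · exact h
  · exact hαβ u v (latCon_interval hα hαxy hxu huy hxv hvy) h
end

section
/- Let L be a bounded distributive lattice (a distributive lattice with least element 0 and greatest element 1) and θ a congruence of L. Then the following are equivalent: (i) θ is a prime congruence of L; (ii) θ is a maximal congruence of L; (iii) θ has exactly two equivalence classes. -/
set_option linter.unusedSectionVars false

section Aux

variable {L : Type*} [DistribLattice L] [BoundedOrder L] {θ : L → L → Prop}

/-- `θ` has exactly the two classes of `⊥` and `⊤`. -/
def TwoClassCon (θ : L → L → Prop) : Prop :=
  ¬ θ ⊥ ⊤ ∧ ∀ x, θ x ⊥ ∨ θ x ⊤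

lemma latcon_total (hθ : IsLatCon θ) (h : θ ⊥ ⊤) : ∀ x y, θ x y := by
  obtain ⟨hE, hsup, _⟩ := hθ
  have key : ∀ x : L, θ x ⊤ := fun x => by
    have := hsup ⊥ ⊤ x x h (hE.refl x)
    simpa using this
  exact fun x y => hE.trans (key x) (hE.symm (key y))

lemma total_eq (h : ∀ x y : L, θ x y) : θ = (fun _ _ => True) :=
  funext fun a => funext fun b => eq_true (h a b)

lemma proper_not_bot_top (hθ : IsLatCon θ) (hne : θ ≠ (fun _ _ => True)) : ¬ θ ⊥ ⊤ :=
  fun h => hne (total_eq (latcon_total hθ h))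

/-- The congruence `x ↦ θ (x ⊓ a) (y ⊓ a)` (restriction to below `a`). -/
lemma infCon (hθ : IsLatCon θ) (a : L) :
    IsLatCon (fun x y => θ (x ⊓ a) (y ⊓ a)) := by
  obtain ⟨hE, hsup, hinf⟩ := hθ
  refine ⟨⟨fun x => hE.refl _, fun h => hE.symm h, fun h h' => hE.trans h h'⟩, ?_, ?_⟩
  · intro x y u v h h'
    have := hsup _ _ _ _ h h'
    simpa [← inf_sup_right] using this
  · intro x y u v h h'
    have := hinf _ _ _ _ h h'
    simpa [← inf_inf_distrib_right] using this

lemma supCon (hθ : IsLatCon θ) (a : L) :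
    IsLatCon (fun x y => θ (x ⊔ a) (y ⊔ a)) := by
  obtain ⟨hE, hsup, hinf⟩ := hθ
  refine ⟨⟨fun x => hE.refl _, fun h => hE.symm h, fun h h' => hE.trans h h'⟩, ?_, ?_⟩
  · intro x y u v h h'
    have := hsup _ _ _ _ h h'
    simpa [← sup_sup_distrib_right] using this
  · intro x y u v h h'
    have := hinf _ _ _ _ h h'
    simpa [← sup_inf_right] using this

/-- Cancellation: in a distributive lattice, congruent meets and joins with `a`
force congruence. -/
lemma latcon_cancel (hθ : IsLatCon θ) {a x y : L}
    (h1 : θ (x ⊓ a) (y ⊓ a)) (h2 : θ (x ⊔ a) (y ⊔ a)) : θ x y := by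
  obtain ⟨hE, hsup, hinf⟩ := hθ
  -- y = y ⊔ (y ⊓ a) θ y ⊔ (x ⊓ a) = (y ⊔ x) ⊓ (y ⊔ a) θ (y ⊔ x) ⊓ (x ⊔ a)
  --   = x ⊔ (y ⊓ a) θ x ⊔ (x ⊓ a) = x
  have s1 : θ y (y ⊔ (x ⊓ a)) := by
    have := hsup y y (y ⊓ a) (x ⊓ a) (hE.refl y) (hE.symm h1)
    simpa using this
  have e1 : y ⊔ (x ⊓ a) = (y ⊔ x) ⊓ (y ⊔ a) := sup_inf_left ..
  have s2 : θ ((y ⊔ x) ⊓ (y ⊔ a)) ((y ⊔ x) ⊓ (x ⊔ a)) :=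
    hinf _ _ _ _ (hE.refl _) (hE.symm h2)
  have e2 : (y ⊔ x) ⊓ (x ⊔ a) = x ⊔ (y ⊓ a) := by
    rw [sup_comm y x, ← sup_inf_left]
  have s3 : θ (x ⊔ (y ⊓ a)) x := by
    have := hsup x x (y ⊓ a) (x ⊓ a) (hE.refl x) (hE.symm h1)
    simpa using this
  exact hE.symm (hE.trans s1 (by rw [e1]; exact hE.trans s2 (by rw [e2]; exact s3)))

lemma prime_twoClass (h : IsPrimeCon θ) : TwoClassCon θ := by
  obtain ⟨hθ, hne, hp⟩ := h
  have hbt : ¬ θ ⊥ ⊤ := proper_not_bot_top hθ hne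
  refine ⟨hbt, ?_⟩
  intro a
  by_contra hcon
  push_neg at hcon
  obtain ⟨ha0, ha1⟩ := hcon
  obtain ⟨hE, hsup, hinf⟩ := hθ
  have := hp (fun x y => θ (x ⊓ a) (y ⊓ a)) (fun x y => θ (x ⊔ a) (y ⊔ a))
    (infCon ⟨hE, hsup, hinf⟩ a) (supCon ⟨hE, hsup, hinf⟩ a)
    (fun x y h1 h2 => latcon_cancel ⟨hE, hsup, hinf⟩ h1 h2)
  rcases this with h | h
  · have : θ a ⊤ := h a ⊤ (by simpa using hE.refl a)
    exact ha1 this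
  · have : θ a ⊥ := h a ⊥ (by simpa using hE.refl a)
    exact ha0 this

lemma max_twoClass (h : IsMaxCon θ) : TwoClassCon θ := by
  obtain ⟨hθ, hne, hm⟩ := h
  have hbt : ¬ θ ⊥ ⊤ := proper_not_bot_top hθ hne
  refine ⟨hbt, ?_⟩
  intro a
  by_contra hcon
  push_neg at hcon
  obtain ⟨ha0, ha1⟩ := hcon
  have hE := hθ.1
  have hsub : ∀ x y, θ x y → θ (x ⊓ a) (y ⊓ a) := fun x y h =>
    hθ.2.2 x y a a h (hE.refl a)
  rcases hm (fun x y => θ (x ⊓ a) (y ⊓ a)) (infCon hθ a) hsub with h | h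
  · -- then θ a ⊤ since (a ⊓ a) θ (⊤ ⊓ a)
    have : θ a ⊤ := by
      have := congrFun (congrFun h a) ⊤
      rw [← this]
      simpa using hE.refl a
    exact ha1 this
  · -- total: then θ (⊥ ⊓ a) (a ⊓ a), i.e. θ ⊥ a
    have : θ (⊥ ⊓ a) (a ⊓ a) := by rw [congrFun (congrFun h ⊥) a]; trivial
    exact ha0 (hE.symm (by simpa using this))

lemma twoClass_max (hθ : IsLatCon θ) (h : TwoClassCon θ) : IsMaxCon θ := by
  obtain ⟨hbt, hcl⟩ := h
  have hE := hθ.1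
  refine ⟨hθ, fun he => hbt (by rw [he]; trivial), ?_⟩
  intro φ hφ hsub
  by_cases heq : ∀ x y, φ x y → θ x y
  · left
    exact funext fun x => funext fun y => propext ⟨heq x y, hsub x y⟩
  · right
    push_neg at heq
    obtain ⟨x, y, hxy, hnxy⟩ := heq
    have hφE := hφ.1
    -- x and y lie in different θ-classes; hence φ ⊥ ⊤
    have hφbt : φ ⊥ ⊤ := by
      rcases hcl x with hx | hx <;> rcases hcl y with hy | hy
      · exact absurd (hE.trans hx (hE.symm hy)) hnxy
      · exact hφE.trans (hsub _ _ (hE.symm hx)) (hφE.trans hxy (hsub _ _ hy))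
      · exact hφE.trans (hsub _ _ (hE.symm hy)) (hφE.trans (hφE.symm hxy) (hsub _ _ hx))
      · exact absurd (hE.trans hx (hE.symm hy)) hnxy
    exact total_eq (latcon_total hφ hφbt)

lemma twoClass_prime (hθ : IsLatCon θ) (h : TwoClassCon θ) : IsPrimeCon θ := by
  obtain ⟨hbt, hcl⟩ := h
  have hE := hθ.1
  refine ⟨hθ, fun he => hbt (by rw [he]; trivial), ?_⟩
  intro α β hα hβ hint
  by_contra hcon
  push_neg at hcon
  obtain ⟨⟨a, b, hab, hnab⟩, ⟨c, d, hcd, hncd⟩⟩ := hcon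
  -- normalize: find a' θ ⊥, b' θ ⊤ with α a' b'
  have norm : ∀ (γ : L → L → Prop), IsLatCon γ → ∀ a b, γ a b → ¬ θ a b →
      ∃ a' b', γ a' b' ∧ θ a' ⊥ ∧ θ b' ⊤ := by
    intro γ hγ a b hab hnab
    rcases hcl a with ha | ha <;> rcases hcl b with hb | hb
    · exact absurd (hE.trans ha (hE.symm hb)) hnab
    · exact ⟨a, b, hab, ha, hb⟩
    · exact ⟨b, a, hγ.1.symm hab, hb, ha⟩
    · exact absurd (hE.trans ha (hE.symm hb)) hnab
  obtain ⟨a, b, hab, ha0, hb1⟩ := norm α hα a b hab hnab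
  obtain ⟨c, d, hcd, hc0, hd1⟩ := norm β hβ c d hcd hncd
  -- s = a ⊔ c, t = (a ⊔ c) ⊔ (b ⊓ d) are related by both α and β
  set s := a ⊔ c with hs
  set t := (a ⊔ c) ⊔ (b ⊓ d) with ht
  have hαst : α s t := by
    have h1 : α (a ⊓ d) (b ⊓ d) := hα.2.2 _ _ _ _ hab (hα.1.refl d)
    have h2 : α ((a ⊔ c) ⊔ (a ⊓ d)) t := hα.2.1 _ _ _ _ (hα.1.refl (a ⊔ c)) h1
    have e : (a ⊔ c) ⊔ (a ⊓ d) = s := by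
      rw [hs]
      exact sup_eq_left.mpr (le_trans inf_le_left le_sup_left)
    rwa [e] at h2
  have hβst : β s t := by
    have h1 : β (b ⊓ c) (b ⊓ d) := hβ.2.2 _ _ _ _ (hβ.1.refl b) hcd
    have h2 : β ((a ⊔ c) ⊔ (b ⊓ c)) t := hβ.2.1 _ _ _ _ (hβ.1.refl (a ⊔ c)) h1
    have e : (a ⊔ c) ⊔ (b ⊓ c) = s := by
      rw [hs]
      exact sup_eq_left.mpr (le_trans inf_le_right le_sup_right)
    rwa [e] at h2
  have hst : θ s t := hint s t hαst hβst
  -- but θ s ⊥ and θ t ⊤, contradiction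
  have hs0 : θ s ⊥ := by
    have := hθ.2.1 _ _ _ _ ha0 hc0
    simpa [hs] using this
  have ht1 : θ t ⊤ := by
    have hbd : θ (b ⊓ d) ⊤ := by
      have := hθ.2.2 _ _ _ _ hb1 hd1
      simpa using this
    have := hθ.2.1 _ _ _ _ (hE.refl (a ⊔ c)) hbd
    simpa [ht] using this
  exact hbt (hE.trans (hE.symm hs0) (hE.trans hst ht1))

lemma quot_mk_eq (hθ : IsLatCon θ) {a b : L} :
    Quot.mk θ a = Quot.mk θ b ↔ θ a b :=
  ⟨fun h => hθ.1.eqvGen_iff.mp (Quot.eqvGen_exact h), fun h => Quot.sound h⟩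

lemma twoClass_card (hθ : IsLatCon θ) (h : TwoClassCon θ) :
    Cardinal.mk (Quot θ) = 2 := by
  obtain ⟨hbt, hcl⟩ := h
  rw [Cardinal.mk_eq_two_iff]
  refine ⟨Quot.mk θ ⊥, Quot.mk θ ⊤, fun he => hbt ((quot_mk_eq hθ).mp he), ?_⟩
  ext q
  simp only [Set.mem_insert_iff, Set.mem_singleton_iff, Set.mem_univ, iff_true]
  induction q using Quot.ind with
  | _ x =>
    rcases hcl x with hx | hx
    · exact Or.inl ((quot_mk_eq hθ).mpr hx)
    · exact Or.inr ((quot_mk_eq hθ).mpr hx)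

lemma card_twoClass (hθ : IsLatCon θ) (h : Cardinal.mk (Quot θ) = 2) :
    TwoClassCon θ := by
  rw [Cardinal.mk_eq_two_iff] at h
  obtain ⟨x, y, hxy, huniv⟩ := h
  have hbt : ¬ θ ⊥ ⊤ := by
    intro hb
    have htot := latcon_total hθ hb
    obtain ⟨x', hx'⟩ := Quot.exists_rep x
    obtain ⟨y', hy'⟩ := Quot.exists_rep y
    exact hxy (by rw [← hx', ← hy']; exact (quot_mk_eq hθ).mpr (htot x' y'))
  refine ⟨hbt, ?_⟩
  intro z
  have mem : ∀ w : L, Quot.mk θ w = x ∨ Quot.mk θ w = y := by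
    intro w
    have : Quot.mk θ w ∈ ({x, y} : Set (Quot θ)) := by rw [huniv]; trivial
    simpa using this
  have hne : Quot.mk θ ⊥ ≠ Quot.mk θ ⊤ := fun he => hbt ((quot_mk_eq hθ).mp he)
  rcases mem ⊥ with h0 | h0 <;> rcases mem ⊤ with h1 | h1 <;> rcases mem z with hz | hz
  · exact absurd (h0.trans h1.symm) hne
  · exact absurd (h0.trans h1.symm) hne
  · exact Or.inl ((quot_mk_eq hθ).mp (hz.trans h0.symm))
  · exact Or.inr ((quot_mk_eq hθ).mp (hz.trans h1.symm))
  · exact Or.inr ((quot_mk_eq hθ).mp (hz.trans h1.symm))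
  · exact Or.inl ((quot_mk_eq hθ).mp (hz.trans h0.symm))
  · exact absurd (h0.trans h1.symm) hne
  · exact absurd (h0.trans h1.symm) hne

end Aux

/-- In a bounded distributive lattice, a congruence is prime iff it is
maximal iff it has exactly two classes. -/
theorem primeCon_iff_maxCon_iff_two_classes_boundedDistrib
    {L : Type*} [DistribLattice L] [BoundedOrder L] (θ : L → L → Prop)
    (hθ : IsLatCon θ) :
    (IsPrimeCon θ ↔ IsMaxCon θ) ∧ (IsMaxCon θ ↔ Cardinal.mk (Quot θ) = 2) := by
  constructor
  · exact ⟨fun h => twoClass_max hθ (prime_twoClass h),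
      fun h => twoClass_prime hθ (max_twoClass h)⟩
  · exact ⟨fun h => twoClass_card hθ (max_twoClass h),
      fun h => twoClass_max hθ (card_twoClass hθ h)⟩
end

section
/- Let L be a chain (a linearly ordered set, regarded as a lattice with ⊔ = max and ⊓ = min) and θ a congruence of L. Then the following are equivalent: (i) θ is a prime congruence of L; (ii) θ is a maximal congruence of L; (iii) θ has exactly two equivalence classes. -/
section Helpers

variable {L : Type*} [LinearOrder L] (θ : L → L → Prop)

/-- "θ has exactly two classes", phrased elementarily. -/
def TwoSplit : Prop :=
  (∃ a b, ¬ θ a b) ∧ (∀ x y z, θ x y ∨ θ y z ∨ θ x z)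

variable {θ}

/-- Convexity of congruence classes on a chain. -/
lemma con_convex (hθ : IsLatCon θ) {p q r : L} (h : θ p q) (h1 : p ≤ r) (h2 : r ≤ q) :
    θ p r := by
  have := hθ.2.2 r r q p (hθ.1.refl r) (hθ.1.symm h)
  rw [inf_eq_left.mpr h2, inf_eq_right.mpr h1] at this
  exact hθ.1.symm this

/-- Key collapsing lemma on a chain. -/
lemma key_collapse (hθ : IsLatCon θ) {t u y : L}
    (h1 : θ (t ⊔ y) (u ⊔ y)) (h2 : θ (t ⊓ y) (u ⊓ y)) : θ t u := by
  rcases le_total u y with huy | hyu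
  · rcases le_total t y with hty | hyt
    · rwa [inf_eq_left.mpr hty, inf_eq_left.mpr huy] at h2
    · rw [sup_eq_left.mpr hyt, sup_eq_right.mpr huy] at h1
      rw [inf_eq_right.mpr hyt, inf_eq_left.mpr huy] at h2
      exact hθ.1.trans h1 h2
  · rcases le_total t y with hty | hyt
    · rw [sup_eq_right.mpr hty, sup_eq_left.mpr hyu] at h1
      rw [inf_eq_left.mpr hty, inf_eq_right.mpr hyu] at h2
      exact hθ.1.trans h2 h1
    · rwa [sup_eq_left.mpr hyt, sup_eq_left.mpr hyu] at h1

lemma ts_to_max (hθ : IsLatCon θ) (h : TwoSplit θ) : IsMaxCon θ := by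
  obtain ⟨⟨a, b, hab⟩, htri⟩ := h
  refine ⟨hθ, ?_, ?_⟩
  · intro h; exact hab (by rw [h]; trivial)
  · intro φ hφ hsub
    by_cases hs : ∀ x y, φ x y → θ x y
    · left; funext x y; exact propext ⟨hs x y, hsub x y⟩
    · right
      push_neg at hs
      obtain ⟨c, d, hcd, hncd⟩ := hs
      have cover : ∀ x : L, θ x c ∨ θ x d := by
        intro x
        rcases htri x c d with h | h | h
        · exact Or.inl h
        · exact absurd h hncd
        · exact Or.inr h
      have link : ∀ x : L, φ x c := by
        intro x
        rcases cover x with h | h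
        · exact hsub _ _ h
        · exact hφ.1.trans (hsub _ _ h) (hφ.1.symm hcd)
      funext x y
      exact eq_true (hφ.1.trans (link x) (hφ.1.symm (link y)))

lemma max_to_ts (hθ : IsLatCon θ) (h : IsMaxCon θ) : TwoSplit θ := by
  obtain ⟨-, hproper, hmax⟩ := h
  have hex : ∃ p q : L, ¬ θ p q := by
    by_contra hc
    push_neg at hc
    exact hproper (funext fun x => funext fun y => eq_true (hc x y))
  obtain ⟨p₀, q₀, hpq₀⟩ := hex
  obtain ⟨p, q, hpq, hle⟩ : ∃ p q : L, ¬ θ p q ∧ p ≤ q := by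
    rcases le_total p₀ q₀ with h | h
    · exact ⟨p₀, q₀, hpq₀, h⟩
    · exact ⟨q₀, p₀, fun hh => hpq₀ (hθ.1.symm hh), h⟩
  set U : L → Prop := fun x => θ x (x ⊔ q) with hUdef
  have Umono : ∀ {x y : L}, U x → x ≤ y → U y := by
    intro x y hx hxy
    have := hθ.2.1 x (x ⊔ q) y y hx (hθ.1.refl y)
    show θ y (y ⊔ q)
    rwa [sup_eq_right.mpr hxy, sup_right_comm, sup_eq_right.mpr hxy] at this
  have Usup : ∀ x y : L, U (x ⊔ y) ↔ U x ∨ U y := by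
    intro x y
    constructor
    · intro h
      rcases le_total x y with hxy | hyx
      · rw [sup_eq_right.mpr hxy] at h; exact Or.inr h
      · rw [sup_eq_left.mpr hyx] at h; exact Or.inl h
    · rintro (h | h)
      · exact Umono h le_sup_left
      · exact Umono h le_sup_right
  have Uinf : ∀ x y : L, U (x ⊓ y) ↔ U x ∧ U y := by
    intro x y
    constructor
    · intro h; exact ⟨Umono h inf_le_left, Umono h inf_le_right⟩
    · rintro ⟨hx, hy⟩
      rcases le_total x y with hxy | hyx
      · rwa [inf_eq_left.mpr hxy]
      · rwa [inf_eq_right.mpr hyx]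
  set φ : L → L → Prop := fun x y => (U x ↔ U y) with hφdef
  have hφ : IsLatCon φ := by
    refine ⟨⟨fun _ => Iff.rfl, Iff.symm, Iff.trans⟩, ?_, ?_⟩
    · intro a b c d h1 h2
      show U (a ⊔ c) ↔ U (b ⊔ d)
      rw [Usup, Usup]
      exact or_congr h1 h2
    · intro a b c d h1 h2
      show U (a ⊓ c) ↔ U (b ⊓ d)
      rw [Uinf, Uinf]
      exact and_congr h1 h2
  have hsub : ∀ a b, θ a b → φ a b := by
    intro a b h
    show U a ↔ U b
    have hq := hθ.2.1 a b q q h (hθ.1.refl q)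
    constructor
    · intro ha; exact hθ.1.trans (hθ.1.trans (hθ.1.symm h) ha) hq
    · intro hb; exact hθ.1.trans (hθ.1.trans h hb) (hθ.1.symm hq)
  have hUq : U q := by show θ q (q ⊔ q); rw [sup_idem]; exact hθ.1.refl q
  have hUp : ¬ U p := by
    show ¬ θ p (p ⊔ q)
    rwa [sup_eq_right.mpr hle]
  have hφproper : φ ≠ (fun _ _ => True) := by
    intro h
    have hpqφ : φ p q := by rw [h]; trivial
    exact hUp (hpqφ.mpr hUq)
  rcases hmax φ hφ hsub with heq | heq
  · constructor
    · exact ⟨p, q, hpq⟩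
    · intro x y z
      rw [← heq]
      by_cases hx : U x <;> by_cases hy : U y <;> by_cases hz : U z <;>
        simp only [hφdef] <;> tauto
  · exact absurd heq hφproper

lemma ts_to_prime (hθ : IsLatCon θ) (h : TwoSplit θ) : IsPrimeCon θ := by
  obtain ⟨⟨a₀, b₀, hab₀⟩, htri⟩ := h
  refine ⟨hθ, fun hh => hab₀ (by rw [hh]; trivial), ?_⟩
  intro α β hα hβ hint
  by_contra hc
  push_neg at hc
  obtain ⟨⟨a₁, b₁, hαab₁, hnab₁⟩, ⟨c₁, d₁, hβcd₁, hncd₁⟩⟩ := hc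
  obtain ⟨a, b, hαab, hnab, hab⟩ : ∃ a b : L, α a b ∧ ¬ θ a b ∧ a ≤ b := by
    rcases le_total a₁ b₁ with h | h
    · exact ⟨a₁, b₁, hαab₁, hnab₁, h⟩
    · exact ⟨b₁, a₁, hα.1.symm hαab₁, fun hh => hnab₁ (hθ.1.symm hh), h⟩
  obtain ⟨c, d, hβcd, hncd, hcd⟩ : ∃ c d : L, β c d ∧ ¬ θ c d ∧ c ≤ d := by
    rcases le_total c₁ d₁ with h | h
    · exact ⟨c₁, d₁, hβcd₁, hncd₁, h⟩
    · exact ⟨d₁, c₁, hβ.1.symm hβcd₁, fun hh => hncd₁ (hθ.1.symm hh), h⟩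
  have cover : ∀ x : L, θ x a ∨ θ x b := by
    intro x
    rcases htri x a b with h | h | h
    · exact Or.inl h
    · exact absurd h hnab
    · exact Or.inr h
  have hca : θ c a := by
    rcases cover c with h | h
    · exact h
    · exfalso
      rcases cover d with h' | h'
      · have := hθ.2.2 c b d a h h'
        rw [inf_eq_left.mpr hcd, inf_eq_right.mpr hab] at this
        exact hnab (hθ.1.trans (hθ.1.symm this) h)
      · exact hncd (hθ.1.trans h (hθ.1.symm h'))
  have hdb : θ d b := by
    rcases cover d with h | h
    · exact absurd (hθ.1.trans hca (hθ.1.symm h)) hncd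
    · exact h
  set m := a ⊔ c with hm
  set n := b ⊓ d with hn
  have hma : θ m a := by
    have := hθ.2.1 a a c a (hθ.1.refl a) hca
    rwa [sup_idem] at this
  have hnb : θ n b := by
    have := hθ.2.2 b b d b (hθ.1.refl b) hdb
    rwa [inf_idem] at this
  have hmn : ¬ θ m n := fun hh =>
    hnab (hθ.1.trans (hθ.1.symm hma) (hθ.1.trans hh hnb))
  have hcb : c ≤ b := by
    rcases le_total c b with h | h
    · exact h
    · exact absurd (con_convex hθ (hθ.1.symm hca) hab h) hnab
  have hmb : m ≤ b := sup_le hab hcb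
  have hmlen : m ≤ n := by
    rcases le_total m n with h | h
    · exact h
    · exact absurd (hθ.1.symm (con_convex hθ hnb h hmb)) hmn
  have h1 : α m b := by
    have := hα.2.1 a b m m hαab (hα.1.refl m)
    rwa [sup_eq_right.mpr (le_sup_left : a ≤ m), sup_eq_left.mpr hmb] at this
  have h2 : α m n := by
    have := hα.2.2 m b n n h1 (hα.1.refl n)
    rwa [inf_eq_left.mpr hmlen, inf_eq_right.mpr (inf_le_left : n ≤ b)] at this
  have hmd : m ≤ d := le_trans hmlen inf_le_right
  have h3 : β m d := by
    have := hβ.2.1 c d m m hβcd (hβ.1.refl m)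
    rwa [sup_eq_right.mpr (le_sup_right : c ≤ m), sup_eq_left.mpr hmd] at this
  have h4 : β m n := by
    have := hβ.2.2 m d n n h3 (hβ.1.refl n)
    rwa [inf_eq_left.mpr hmlen, inf_eq_right.mpr (inf_le_right : n ≤ d)] at this
  exact hmn (hint m n h2 h4)

lemma prime_to_ts (hθ : IsLatCon θ) (h : IsPrimeCon θ) : TwoSplit θ := by
  obtain ⟨-, hproper, hprime⟩ := h
  have hex : ∃ p q : L, ¬ θ p q := by
    by_contra hc
    push_neg at hc
    exact hproper (funext fun x => funext fun y => eq_true (hc x y))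
  refine ⟨hex, ?_⟩
  intro x y z
  by_contra hc
  push_neg at hc
  obtain ⟨hxy, hyz, hxz⟩ := hc
  have ns : ∀ u v : L, ¬ θ u v → ¬ θ v u := fun u v h hh => h (hθ.1.symm hh)
  obtain ⟨p, q, r, hpq, hqr, hn1, hn2⟩ :
      ∃ p q r : L, p ≤ q ∧ q ≤ r ∧ ¬ θ p q ∧ ¬ θ q r := by
    rcases le_total x y with h₁ | h₁ <;> rcases le_total y z with h₂ | h₂ <;>
      rcases le_total x z with h₃ | h₃
    · exact ⟨x, y, z, h₁, h₂, hxy, hyz⟩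
    · exact ⟨x, y, z, h₁, h₂, hxy, hyz⟩
    · exact ⟨x, z, y, h₃, h₂, hxz, ns _ _ hyz⟩
    · exact ⟨z, x, y, h₃, h₁, ns _ _ hxz, hxy⟩
    · exact ⟨y, x, z, h₁, h₃, ns _ _ hxy, hxz⟩
    · exact ⟨y, z, x, h₂, h₃, hyz, ns _ _ hxz⟩
    · exact ⟨z, y, x, h₂, h₁, ns _ _ hyz, ns _ _ hxy⟩
    · exact ⟨z, y, x, h₂, h₁, ns _ _ hyz, ns _ _ hxy⟩
  set α : L → L → Prop := fun t u => θ (t ⊔ q) (u ⊔ q) ∧ θ (t ⊓ p) (u ⊓ p) with hαdef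
  set β : L → L → Prop := fun t u => θ (t ⊔ r) (u ⊔ r) ∧ θ (t ⊓ q) (u ⊓ q) with hβdef
  have mkcon : ∀ w₁ w₂ : L,
      IsLatCon (fun t u => θ (t ⊔ w₁) (u ⊔ w₁) ∧ θ (t ⊓ w₂) (u ⊓ w₂)) := by
    intro w₁ w₂
    refine ⟨⟨fun _ => ⟨hθ.1.refl _, hθ.1.refl _⟩,
        fun h => ⟨hθ.1.symm h.1, hθ.1.symm h.2⟩,
        fun h h' => ⟨hθ.1.trans h.1 h'.1, hθ.1.trans h.2 h'.2⟩⟩, ?_, ?_⟩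
    · intro a b c d h h'
      constructor
      · rw [sup_sup_distrib_right a c w₁, sup_sup_distrib_right b d w₁]
        exact hθ.2.1 _ _ _ _ h.1 h'.1
      · rw [inf_sup_right a c w₂, inf_sup_right b d w₂]
        exact hθ.2.1 _ _ _ _ h.2 h'.2
    · intro a b c d h h'
      constructor
      · rw [sup_inf_right a c w₁, sup_inf_right b d w₁]
        exact hθ.2.2 _ _ _ _ h.1 h'.1
      · rw [inf_inf_distrib_right a c w₂, inf_inf_distrib_right b d w₂]
        exact hθ.2.2 _ _ _ _ h.2 h'.2
  have hα : IsLatCon α := mkcon q p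
  have hβ : IsLatCon β := mkcon r q
  have hint : ∀ a b, α a b → β a b → θ a b := by
    intro a b ha hb
    exact key_collapse hθ ha.1 hb.2
  have hαpq : α p q := by
    constructor
    · rw [sup_eq_right.mpr hpq, sup_idem]; exact hθ.1.refl q
    · rw [inf_idem, inf_eq_right.mpr hpq]; exact hθ.1.refl p
  have hβqr : β q r := by
    constructor
    · rw [sup_eq_right.mpr hqr, sup_idem]; exact hθ.1.refl r
    · rw [inf_idem, inf_eq_right.mpr hqr]; exact hθ.1.refl q
  rcases hprime α β hα hβ hint with hs | hs
  · exact hn1 (hs p q hαpq)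
  · exact hn2 (hs q r hβqr)

lemma quot_mk_eq_iff (hθ : Equivalence θ) {a b : L} :
    Quot.mk θ a = Quot.mk θ b ↔ θ a b := by
  rw [Quot.eq]
  exact hθ.eqvGen_iff

lemma ts_iff_card (hθ : IsLatCon θ) :
    TwoSplit θ ↔ Cardinal.mk (Quot θ) = 2 := by
  rw [Cardinal.mk_eq_two_iff]
  constructor
  · rintro ⟨⟨a, b, hab⟩, htri⟩
    refine ⟨Quot.mk θ a, Quot.mk θ b, ?_, ?_⟩
    · intro h; exact hab ((quot_mk_eq_iff hθ.1).mp h)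
    · apply Set.eq_univ_of_forall
      intro s
      induction s using Quot.ind with
      | _ x =>
        rcases htri x a b with h | h | h
        · exact Or.inl ((quot_mk_eq_iff hθ.1).mpr h)
        · exact absurd h hab
        · exact Or.inr ((quot_mk_eq_iff hθ.1).mpr h)
  · rintro ⟨s, t, hst, huniv⟩
    have hcov : ∀ u : Quot θ, u = s ∨ u = t := by
      intro u
      have : u ∈ ({s, t} : Set (Quot θ)) := huniv.symm ▸ Set.mem_univ u
      simpa using this
    obtain ⟨a, ha⟩ := Quot.exists_rep s
    obtain ⟨b, hb⟩ := Quot.exists_rep t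
    have key : ∀ u v : L, Quot.mk θ u = Quot.mk θ v → θ u v :=
      fun u v h => (quot_mk_eq_iff hθ.1).mp h
    constructor
    · refine ⟨a, b, fun h => hst ?_⟩
      rw [← ha, ← hb]
      exact (quot_mk_eq_iff hθ.1).mpr h
    · intro u v w
      rcases hcov (Quot.mk θ u) with hu | hu <;>
        rcases hcov (Quot.mk θ v) with hv | hv <;>
        rcases hcov (Quot.mk θ w) with hw | hw
      all_goals first
        | exact Or.inl (key u v (hu.trans hv.symm))
        | exact Or.inr (Or.inl (key v w (hv.trans hw.symm)))
        | exact Or.inr (Or.inr (key u w (hu.trans hw.symm)))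

end Helpers

/-- In a chain, a congruence is prime iff it is maximal iff it has
exactly two classes. -/
theorem primeCon_iff_maxCon_iff_two_classes_chain
    {L : Type*} [LinearOrder L] (θ : L → L → Prop) (hθ : IsLatCon θ) :
    (IsPrimeCon θ ↔ IsMaxCon θ) ∧ (IsMaxCon θ ↔ Cardinal.mk (Quot θ) = 2) := by
  constructor
  · constructor
    · exact fun hp => ts_to_max hθ (prime_to_ts hθ hp)
    · exact fun hm => ts_to_prime hθ (max_to_ts hθ hm)
  · constructor
    · exact fun hm => (ts_iff_card hθ).mp (max_to_ts hθ hm)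
    · exact fun hc => ts_to_max hθ ((ts_iff_card hθ).mpr hc)
end

section
/- Let L be a lattice which is either finite and modular, or relatively complemented and satisfying the ascending chain condition (no infinite strictly increasing chain). Then a congruence of L is prime if and only if it is maximal. -/
namespace LatPrime

variable {L : Type*} [Lattice L]

section Basic

variable {θ : L → L → Prop}

lemma refl' (hθ : IsLatCon θ) (a : L) : θ a a := hθ.1.refl a

lemma symm' (hθ : IsLatCon θ) {a b : L} (h : θ a b) : θ b a := hθ.1.symm h

lemma trans' (hθ : IsLatCon θ) {a b c : L} (h1 : θ a b) (h2 : θ b c) : θ a c := hθ.1.trans h1 h2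

lemma sup_const (hθ : IsLatCon θ) {a b : L} (t : L) (h : θ a b) : θ (a ⊔ t) (b ⊔ t) :=
  hθ.2.1 a b t t h (refl' hθ t)

lemma inf_const (hθ : IsLatCon θ) {a b : L} (t : L) (h : θ a b) : θ (a ⊓ t) (b ⊓ t) :=
  hθ.2.2 a b t t h (refl' hθ t)

/-- From `θ x y` deduce `θ (x ⊓ y) (x ⊔ y)`. -/
lemma con_inf_sup (hθ : IsLatCon θ) {x y : L} (h : θ x y) : θ (x ⊓ y) (x ⊔ y) := by
  have h1 : θ (x ⊓ y) y := by
    have := inf_const hθ y h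
    simpa using this
  have h2 : θ (x ⊔ y) y := by
    have := sup_const hθ y h
    simpa using this
  exact trans' hθ h1 (symm' hθ h2)

/-- Convexity: if `θ u v` and `u ≤ x ≤ y ≤ v` then `θ x y`. -/
lemma con_convex (hθ : IsLatCon θ) {u v x y : L} (h : θ u v) (h1 : u ≤ x) (h2 : x ≤ y)
    (h3 : y ≤ v) : θ x y := by
  have hx : θ x v := by
    have := sup_const hθ x h
    rw [sup_eq_right.2 h1, sup_eq_left.2 (h2.trans h3)] at this
    exact this
  have hy : θ y v := by
    have := sup_const hθ y h
    rw [sup_eq_right.2 (h1.trans h2), sup_eq_left.2 h3] at this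
    exact this
  exact trans' hθ hx (symm' hθ hy)

/-- From `θ (x ⊓ y) (x ⊔ y)` deduce `θ x y`. -/
lemma con_of_inf_sup (hθ : IsLatCon θ) {x y : L} (h : θ (x ⊓ y) (x ⊔ y)) : θ x y := by
  have hx : θ x (x ⊔ y) := con_convex hθ h inf_le_left le_sup_left le_rfl
  have hy : θ y (x ⊔ y) := con_convex hθ h inf_le_right le_sup_right le_rfl
  exact trans' hθ hx (symm' hθ hy)

lemma meet_isCon {α β : L → L → Prop} (hα : IsLatCon α) (hβ : IsLatCon β) :
    IsLatCon (fun x y => α x y ∧ β x y) := by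
  refine ⟨⟨fun x => ⟨refl' hα x, refl' hβ x⟩, fun h => ⟨symm' hα h.1, symm' hβ h.2⟩,
    fun h1 h2 => ⟨trans' hα h1.1 h2.1, trans' hβ h1.2 h2.2⟩⟩, ?_, ?_⟩
  · exact fun a b c d h1 h2 => ⟨hα.2.1 a b c d h1.1 h2.1, hβ.2.1 a b c d h1.2 h2.2⟩
  · exact fun a b c d h1 h2 => ⟨hα.2.2 a b c d h1.1 h2.1, hβ.2.2 a b c d h1.2 h2.2⟩

end Basic

section Join

variable {α β : L → L → Prop}

/-- The join of two congruences: transitive closure of the union. -/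
def joinCon (α β : L → L → Prop) : L → L → Prop :=
  Relation.ReflTransGen (fun u v => α u v ∨ β u v)

lemma joinCon_left (hα : α a b) : joinCon α β a b :=
  Relation.ReflTransGen.single (Or.inl hα)

lemma joinCon_right (hβ : β a b) : joinCon α β a b :=
  Relation.ReflTransGen.single (Or.inr hβ)

lemma joinCon_le {θ : L → L → Prop} (hθ : IsLatCon θ) (h1 : ∀ a b, α a b → θ a b)
    (h2 : ∀ a b, β a b → θ a b) : ∀ a b, joinCon α β a b → θ a b := by
  intro a b h
  induction h with
  | refl => exact refl' hθ a
  | tail _ hstep ih =>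
      exact trans' hθ ih (hstep.elim (h1 _ _) (h2 _ _))

lemma joinCon_isCon (hα : IsLatCon α) (hβ : IsLatCon β) : IsLatCon (joinCon α β) := by
  have hsymm : Symmetric (joinCon α β) :=
    fun x y h => (@Relation.ReflTransGen.stdSymm L (fun u v => α u v ∨ β u v)
      ⟨fun x y h => h.elim (fun h' => Or.inl (symm' hα h')) (fun h' => Or.inr (symm' hβ h'))⟩).symm x y h
  have hsupc : ∀ (t : L) x y, joinCon α β x y → joinCon α β (x ⊔ t) (y ⊔ t) := by
    intro t x y h
    exact Relation.ReflTransGen.lift (fun z => z ⊔ t)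
      (fun u v h' => h'.elim (fun h'' => Or.inl (sup_const hα t h''))
        (fun h'' => Or.inr (sup_const hβ t h''))) _ _ h
  have hinfc : ∀ (t : L) x y, joinCon α β x y → joinCon α β (x ⊓ t) (y ⊓ t) := by
    intro t x y h
    exact Relation.ReflTransGen.lift (fun z => z ⊓ t)
      (fun u v h' => h'.elim (fun h'' => Or.inl (inf_const hα t h''))
        (fun h'' => Or.inr (inf_const hβ t h''))) _ _ h
  refine ⟨⟨fun x => Relation.ReflTransGen.refl, fun h => hsymm h,
    fun h1 h2 => Relation.ReflTransGen.trans h1 h2⟩, ?_, ?_⟩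
  · intro a b c d h1 h2
    have s1 : joinCon α β (a ⊔ c) (b ⊔ c) := hsupc c a b h1
    have s2 : joinCon α β (c ⊔ b) (d ⊔ b) := hsupc b c d h2
    rw [sup_comm c b, sup_comm d b] at s2
    exact Relation.ReflTransGen.trans s1 s2
  · intro a b c d h1 h2
    have s1 : joinCon α β (a ⊓ c) (b ⊓ c) := hinfc c a b h1
    have s2 : joinCon α β (c ⊓ b) (d ⊓ b) := hinfc b c d h2
    rw [inf_comm c b, inf_comm d b] at s2
    exact Relation.ReflTransGen.trans s1 s2

/-- Funayama–Nakayama distributivity of the congruence lattice. -/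
lemma distrib_con {γ : L → L → Prop} (hγ : IsLatCon γ) (hα : IsLatCon α) (hβ : IsLatCon β)
    {x y : L} (hg : γ x y) (hj : joinCon α β x y) :
    joinCon (fun u v => γ u v ∧ α u v) (fun u v => γ u v ∧ β u v) x y := by
  set u := x ⊓ y with hu
  set v := x ⊔ y with hv
  have hguv : γ u v := con_inf_sup hγ hg
  have hjcon : IsLatCon (joinCon α β) := joinCon_isCon hα hβ
  have hjuv : joinCon α β u v := con_inf_sup hjcon hj
  set f : L → L := fun z => (z ⊔ u) ⊓ v with hf
  have hfmem : ∀ z, u ≤ f z ∧ f z ≤ v := fun z =>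
    ⟨le_inf le_sup_right inf_le_sup, inf_le_right⟩
  have hγf : ∀ z z', γ (f z) (f z') := by
    intro z z'
    have h1 : γ (f z) v := con_convex hγ hguv (hfmem z).1 (hfmem z).2 le_rfl
    have h2 : γ (f z') v := con_convex hγ hguv (hfmem z').1 (hfmem z').2 le_rfl
    exact trans' hγ h1 (symm' hγ h2)
  have hlift : Relation.ReflTransGen
      (fun w w' => (γ w w' ∧ α w w') ∨ (γ w w' ∧ β w w')) (f u) (f v) := by
    refine Relation.ReflTransGen.lift f ?_ _ _ hjuv
    intro z z' hz
    rcases hz with hz | hz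
    · exact Or.inl ⟨hγf z z', inf_const hα v (sup_const hα u hz)⟩
    · exact Or.inr ⟨hγf z z', inf_const hβ v (sup_const hβ u hz)⟩
  have hfu : f u = u := by
    simp only [hf, sup_idem]
    exact inf_eq_left.2 inf_le_sup
  have hfv : f v = v := by
    simp only [hf]
    rw [sup_eq_left.2 inf_le_sup]
    exact inf_idem v
  rw [hfu, hfv] at hlift
  have hδ : IsLatCon (joinCon (fun u v => γ u v ∧ α u v) (fun u v => γ u v ∧ β u v)) :=
    joinCon_isCon (meet_isCon hγ hα) (meet_isCon hγ hβ)
  exact con_of_inf_sup hδ hlift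

end Join

/-- Maximal congruences are prime (uses distributivity only). -/
theorem maxCon_isPrimeCon {θ : L → L → Prop} (h : IsMaxCon θ) : IsPrimeCon θ := by
  obtain ⟨hθ, hproper, hmax⟩ := h
  refine ⟨hθ, hproper, ?_⟩
  intro α β hα hβ hmeet
  by_contra hcon
  push_neg at hcon
  obtain ⟨⟨a, b, hαab, hθab⟩, ⟨c, d, hβcd, hθcd⟩⟩ := hcon
  have hJα : IsLatCon (joinCon θ α) := joinCon_isCon hθ hα
  have hJβ : IsLatCon (joinCon θ β) := joinCon_isCon hθ hβ
  have hJαtop : joinCon θ α = (fun _ _ => True) := by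
    rcases hmax _ hJα (fun a b h => joinCon_left h) with h | h
    · exact absurd (h ▸ joinCon_right hαab) hθab
    · exact h
  have hJβtop : joinCon θ β = (fun _ _ => True) := by
    rcases hmax _ hJβ (fun a b h => joinCon_left h) with h | h
    · exact absurd (h ▸ joinCon_right hβcd) hθcd
    · exact h
  have hall : ∀ x y, θ x y := by
    intro x y
    have hx1 : joinCon θ β x y := by rw [hJβtop]; trivial
    have hx2 : joinCon θ α x y := by rw [hJαtop]; trivial
    have hd := distrib_con hJβ hθ hα hx1 hx2
    refine joinCon_le hθ ?_ ?_ x y hd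
    · exact fun u v h => h.2
    · intro u v h
      have hd2 := distrib_con hα hθ hβ h.2 h.1
      refine joinCon_le hθ ?_ ?_ u v hd2
      · exact fun p q h' => h'.2
      · exact fun p q h' => hmeet p q h'.1 h'.2
  exact hproper (funext fun x => funext fun y => eq_true (hall x y))

end LatPrime
namespace LatPrime

variable {L : Type*} [Lattice L]

/-- Pairs reachable from `(a,b)` by joining/meeting both sides with a constant. -/
inductive LatW (a b : L) : L → L → Prop
  | base : LatW a b a b
  | sup (p q t : L) : LatW a b p q → LatW a b (p ⊔ t) (q ⊔ t)
  | inf (p q t : L) : LatW a b p q → LatW a b (p ⊓ t) (q ⊓ t)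

lemma latW_le {a b : L} (hab : a ≤ b) {p q : L} (h : LatW a b p q) : p ≤ q := by
  induction h with
  | base => exact hab
  | sup p q t _ ih => exact sup_le_sup_right ih t
  | inf p q t _ ih => exact inf_le_inf_right t ih

lemma latW_con {θ : L → L → Prop} (hθ : IsLatCon θ) {a b : L} (hab : θ a b) {p q : L}
    (h : LatW a b p q) : θ p q := by
  induction h with
  | base => exact hab
  | sup p q t _ ih => exact sup_const hθ t ih
  | inf p q t _ ih => exact inf_const hθ t ih

/-- Chains of reachable pairs. -/
def latC (a b : L) : L → L → Prop := Relation.ReflTransGen (LatW a b)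

lemma latC_le {a b : L} (hab : a ≤ b) {u v : L} (h : latC a b u v) : u ≤ v := by
  induction h with
  | refl => exact le_rfl
  | tail _ hstep ih => exact ih.trans (latW_le hab hstep)

lemma latC_sup {a b : L} (t : L) {u v : L} (h : latC a b u v) : latC a b (u ⊔ t) (v ⊔ t) :=
  Relation.ReflTransGen.lift (fun z => z ⊔ t) (fun p q h' => LatW.sup p q t h') _ _ h

lemma latC_inf {a b : L} (t : L) {u v : L} (h : latC a b u v) : latC a b (u ⊓ t) (v ⊓ t) :=
  Relation.ReflTransGen.lift (fun z => z ⊓ t) (fun p q h' => LatW.inf p q t h') _ _ h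

lemma latC_restrict {a b u v x y : L} (h : latC a b u v) (h1 : u ≤ x) (h2 : x ≤ y)
    (h3 : y ≤ v) : latC a b x y := by
  have hx : latC a b x (v ⊔ x) := by
    have := latC_sup x h
    rwa [sup_eq_right.2 h1] at this
  rw [sup_eq_left.2 (h2.trans h3)] at hx
  have := latC_inf y hx
  rwa [inf_eq_left.2 h2, inf_eq_right.2 h3] at this

/-- The principal congruence generated by `(a,b)` as chains: `chainCon a b x y`. -/
def chainCon (a b : L) : L → L → Prop := fun x y => latC a b (x ⊓ y) (x ⊔ y)

lemma chainCon_refl (a b x : L) : chainCon a b x x := by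
  unfold chainCon
  rw [inf_idem, sup_idem]
  exact Relation.ReflTransGen.refl

lemma chainCon_symm {a b x y : L} (h : chainCon a b x y) : chainCon a b y x := by
  unfold chainCon at *
  rwa [inf_comm y x, sup_comm y x]

lemma chainCon_trans {a b : L} (hab : a ≤ b) {x y z : L} (hxy : chainCon a b x y)
    (hyz : chainCon a b y z) : chainCon a b x z := by
  unfold chainCon at *
  set a1 := x ⊓ y
  set b1 := x ⊔ y
  set a2 := y ⊓ z
  set b2 := y ⊔ z
  set w := x ⊔ y ⊔ z with hw
  have h1 : latC a b (a1 ⊓ a2) a1 := by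
    have := latC_inf a1 hyz
    rwa [inf_comm a2 a1, inf_eq_right.2 (inf_le_right.trans le_sup_left : a1 ≤ b2)] at this
  have hbw : b1 ⊔ b2 = w := by
    refine le_antisymm (sup_le le_sup_left (sup_le (le_sup_right.trans le_sup_left) le_sup_right))
      (sup_le le_sup_left ((le_sup_right : z ≤ y ⊔ z).trans le_sup_right))
  have h2 : latC a b b1 w := by
    have := latC_sup b1 hyz
    rwa [sup_comm a2 b1, sup_eq_left.2 ((inf_le_left : a2 ≤ y).trans le_sup_right : a2 ≤ b1),
      sup_comm b2 b1, hbw] at this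
  have hbig : latC a b (a1 ⊓ a2) w := (h1.trans hxy).trans h2
  refine latC_restrict hbig ?_ inf_le_sup ?_
  · exact le_inf (inf_le_left.trans inf_le_left) (inf_le_right.trans inf_le_right)
  · exact sup_le (le_sup_left.trans le_sup_left) le_sup_right

lemma chainCon_sup_const {a b x y : L} (t : L) (h : chainCon a b x y) :
    chainCon a b (x ⊔ t) (y ⊔ t) := by
  unfold chainCon at *
  have h1 : latC a b (x ⊓ y ⊔ t) (x ⊔ y ⊔ t) := latC_sup t h
  refine latC_restrict h1 ?_ inf_le_sup ?_
  · exact le_inf (sup_le_sup_right inf_le_left t) (sup_le_sup_right inf_le_right t)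
  · exact sup_le (sup_le_sup_right le_sup_left t) (sup_le_sup_right le_sup_right t)

lemma chainCon_inf_const {a b x y : L} (t : L) (h : chainCon a b x y) :
    chainCon a b (x ⊓ t) (y ⊓ t) := by
  unfold chainCon at *
  have h1 : latC a b (x ⊓ y ⊓ t) ((x ⊔ y) ⊓ t) := latC_inf t h
  refine latC_restrict h1 ?_ inf_le_sup ?_
  · exact le_inf (le_inf (inf_le_left.trans inf_le_left) inf_le_right)
      (le_inf (inf_le_left.trans inf_le_right) inf_le_right)
  · exact sup_le (inf_le_inf_right t le_sup_left) (inf_le_inf_right t le_sup_right)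

lemma chainCon_isCon {a b : L} (hab : a ≤ b) : IsLatCon (chainCon a b) := by
  have htrans : ∀ {x y z : L}, chainCon a b x y → chainCon a b y z → chainCon a b x z :=
    fun h1 h2 => chainCon_trans hab h1 h2
  refine ⟨⟨chainCon_refl a b, chainCon_symm, htrans⟩, ?_, ?_⟩
  · intro p q r s h1 h2
    exact htrans (chainCon_sup_const r h1)
      (by rw [sup_comm q r, sup_comm q s]; exact chainCon_sup_const q h2)
  · intro p q r s h1 h2
    exact htrans (chainCon_inf_const r h1)
      (by rw [inf_comm q r, inf_comm q s]; exact chainCon_inf_const q h2)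

lemma chainCon_ab {a b : L} (hab : a ≤ b) : chainCon a b a b := by
  unfold chainCon
  rw [inf_eq_left.2 hab, sup_eq_right.2 hab]
  exact Relation.ReflTransGen.single LatW.base

/-- The principal congruence generated by `(a,b)`. -/
def latCon (a b : L) : L → L → Prop := fun x y => ∀ ψ : L → L → Prop, IsLatCon ψ → ψ a b → ψ x y

lemma latCon_isCon (a b : L) : IsLatCon (latCon a b) := by
  refine ⟨⟨fun x ψ hψ _ => refl' hψ x, fun h ψ hψ hab => symm' hψ (h ψ hψ hab),
    fun h1 h2 ψ hψ hab => trans' hψ (h1 ψ hψ hab) (h2 ψ hψ hab)⟩, ?_, ?_⟩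
  · exact fun p q r s h1 h2 ψ hψ hab => hψ.2.1 p q r s (h1 ψ hψ hab) (h2 ψ hψ hab)
  · exact fun p q r s h1 h2 ψ hψ hab => hψ.2.2 p q r s (h1 ψ hψ hab) (h2 ψ hψ hab)

lemma latCon_self (a b : L) : latCon a b a b := fun _ _ hab => hab

lemma latCon_sub_chain {a b : L} (hab : a ≤ b) {x y : L} (h : latCon a b x y) :
    chainCon a b x y := h _ (chainCon_isCon hab) (chainCon_ab hab)

/-- Extract a nontrivial single reachable step from a chain. -/
lemma exists_W_step {a b u v : L} (hab : a ≤ b) (h : latC a b u v) (hne : u ≠ v) :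
    ∃ p q, LatW a b p q ∧ p ≠ q ∧ u ≤ p ∧ q ≤ v := by
  induction h using Relation.ReflTransGen.head_induction_on with
  | refl => exact absurd rfl hne
  | head hstep hrest ih =>
      rename_i s t
      by_cases hst : s = t
      · subst hst
        obtain ⟨p, q, h1, h2, h3, h4⟩ := ih hne
        exact ⟨p, q, h1, h2, h3, h4⟩
      · exact ⟨s, t, hstep, hst, le_rfl, latC_le hab hrest⟩

end LatPrime
namespace LatPrime

variable {L : Type*} [Lattice L]

/-- One-step transfer statement (sup case). -/
def StepSup (L : Type*) [Lattice L] : Prop :=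
  ∀ ψ : L → L → Prop, IsLatCon ψ → ∀ p q t r s : L, p ≤ q → p ⊔ t ≤ r → r ≤ s → s ≤ q ⊔ t →
    r ≠ s → ψ r s → ∃ r' s', p ≤ r' ∧ r' ≤ s' ∧ s' ≤ q ∧ r' ≠ s' ∧ ψ r' s'

/-- One-step transfer statement (inf case). -/
def StepInf (L : Type*) [Lattice L] : Prop :=
  ∀ ψ : L → L → Prop, IsLatCon ψ → ∀ p q t r s : L, p ≤ q → p ⊓ t ≤ r → r ≤ s → s ≤ q ⊓ t →
    r ≠ s → ψ r s → ∃ r' s', p ≤ r' ∧ r' ≤ s' ∧ s' ≤ q ∧ r' ≠ s' ∧ ψ r' s'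

lemma stepSup_modular [IsModularLattice L] : StepSup L := by
  intro ψ hψ p q t r s hpq hpt hrs hsq hne hcol
  have htr : t ≤ r := le_sup_right.trans hpt
  have hpr : p ≤ r := le_sup_left.trans hpt
  refine ⟨r ⊓ q, s ⊓ q, le_inf hpr hpq, inf_le_inf_right q hrs, inf_le_right, ?_,
    inf_const hψ q hcol⟩
  intro heq
  have hsqr : s ≤ r ⊔ q := hsq.trans (sup_le (le_sup_right) (htr.trans le_sup_left))
  have hmod : (r ⊔ q) ⊓ s = r ⊔ q ⊓ s := sup_inf_assoc_of_le q hrs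
  rw [inf_eq_right.2 hsqr] at hmod
  apply hne
  rw [hmod, inf_comm q s, ← heq]
  exact sup_inf_self.symm

lemma stepInf_modular [IsModularLattice L] : StepInf L := by
  intro ψ hψ p q t r s hpq hpt hrs hsq hne hcol
  have hst : s ≤ t := hsq.trans inf_le_right
  have hsq' : s ≤ q := hsq.trans inf_le_left
  refine ⟨r ⊔ p, s ⊔ p, le_sup_right, sup_le_sup_right hrs p, sup_le hsq' hpq, ?_,
    sup_const hψ p hcol⟩
  intro heq
  have hps : p ⊓ s ≤ r := (inf_le_inf_left p hst).trans hpt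
  have hmod : (r ⊔ p) ⊓ s = r ⊔ p ⊓ s := sup_inf_assoc_of_le p hrs
  apply hne
  have h1 : (r ⊔ p) ⊓ s = r := by rw [hmod]; exact sup_eq_left.2 hps
  rw [heq] at h1
  rw [← h1, inf_eq_right.2 le_sup_left]

section RelCompl

variable (hrc : ∀ a x b : L, a ≤ x → x ≤ b → ∃ y, x ⊓ y = a ∧ x ⊔ y = b)
include hrc

lemma stepSup_relCompl : StepSup L := by
  intro ψ hψ p q t r s hpq hpt hrs hsq hne hcol
  have htr : t ≤ r := le_sup_right.trans hpt
  have hpr : p ≤ r := le_sup_left.trans hpt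
  have hsqr : s ≤ q ⊔ r := hsq.trans (sup_le le_sup_left (htr.trans le_sup_right))
  obtain ⟨c, hc1, hc2⟩ := hrc r s (q ⊔ r) hrs hsqr
  have hrc' : r ≤ c := hc1 ▸ inf_le_right
  have h1 : ψ c (q ⊔ r) := by
    have := sup_const hψ c hcol
    rwa [sup_eq_right.2 hrc', hc2] at this
  have h2 : ψ (c ⊓ q) q := by
    have := inf_const hψ q h1
    rwa [inf_eq_right.2 (le_sup_left : q ≤ q ⊔ r)] at this
  refine ⟨c ⊓ q, q, le_inf (hpr.trans hrc') hpq, inf_le_right, le_rfl, ?_, h2⟩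
  intro heq
  have hqc : q ≤ c := heq ▸ inf_le_left
  have hceq : c = q ⊔ r := le_antisymm (hc2 ▸ le_sup_right) (sup_le hqc hrc')
  apply hne
  have : s ⊓ c = s := inf_eq_left.2 (hceq ▸ hsqr)
  rw [← hc1, this]

lemma stepInf_relCompl : StepInf L := by
  intro ψ hψ p q t r s hpq hpt hrs hsq hne hcol
  have hst : s ≤ t := hsq.trans inf_le_right
  have hsq' : s ≤ q := hsq.trans inf_le_left
  have hps : p ⊓ s ≤ r := (inf_le_inf_left p hst).trans hpt
  obtain ⟨c, hc1, hc2⟩ := hrc (p ⊓ s) r s hps hrs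
  have hcs : c ≤ s := hc2 ▸ le_sup_right
  have h1 : ψ (p ⊓ s) c := by
    have := inf_const hψ c hcol
    rwa [hc1, inf_eq_right.2 hcs] at this
  have h2 : ψ p (c ⊔ p) := by
    have := sup_const hψ p h1
    rwa [sup_eq_right.2 inf_le_left] at this
  refine ⟨p, c ⊔ p, le_rfl, le_sup_right, sup_le (hcs.trans hsq') hpq, ?_, h2⟩
  intro heq
  have hcp : c ≤ p := heq ▸ le_sup_left
  have : c ≤ r := by
    have : c ≤ p ⊓ s := le_inf hcp hcs
    rw [← hc1] at this
    exact this.trans inf_le_left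
  apply hne
  rw [← hc2, sup_eq_left.2 this]

end RelCompl

/-- Main transfer: a nontrivial collapsed subinterval of a reachable pair yields
a nontrivial collapsed subinterval of `[a,b]`. -/
lemma main_transfer (Hsup : StepSup L) (Hinf : StepInf L) {ψ : L → L → Prop}
    (hψ : IsLatCon ψ) {a b : L} (hab : a ≤ b) {p q : L} (hw : LatW a b p q) :
    ∀ r s, p ≤ r → r ≤ s → s ≤ q → r ≠ s → ψ r s →
      ∃ r' s', a ≤ r' ∧ r' ≤ s' ∧ s' ≤ b ∧ r' ≠ s' ∧ ψ r' s' := by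
  induction hw with
  | base => exact fun r s h1 h2 h3 h4 h5 => ⟨r, s, h1, h2, h3, h4, h5⟩
  | sup p q t hw' ih =>
      intro r s h1 h2 h3 h4 h5
      obtain ⟨r₁, s₁, g1, g2, g3, g4, g5⟩ :=
        Hsup ψ hψ p q t r s (latW_le hab hw') h1 h2 h3 h4 h5
      exact ih r₁ s₁ g1 g2 g3 g4 g5
  | inf p q t hw' ih =>
      intro r s h1 h2 h3 h4 h5
      obtain ⟨r₁, s₁, g1, g2, g3, g4, g5⟩ :=
        Hinf ψ hψ p q t r s (latW_le hab hw') h1 h2 h3 h4 h5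
      exact ih r₁ s₁ g1 g2 g3 g4 g5

/-- Symmetry of principal congruences on covers. -/
lemma cover_sym (Hsup : StepSup L) (Hinf : StepInf L) {a b c d : L} (hab : a ⋖ b) (hcd : c ⋖ d)
    (h : latCon a b c d) : latCon c d a b := by
  have hC : latC a b c d := by
    have := latCon_sub_chain hab.le h
    unfold chainCon at this
    rwa [inf_eq_left.2 hcd.le, sup_eq_right.2 hcd.le] at this
  obtain ⟨p, q, hw, hne, hcp, hqd⟩ := exists_W_step hab.le hC hcd.ne
  have hpq : p < q := lt_of_le_of_ne (latW_le hab.le hw) hne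
  have hpc : p = c := by
    by_contra hch
    exact hcd.2 (lt_of_le_of_ne hcp (Ne.symm hch)) (hpq.trans_le hqd)
  have hqd' : q = d := by
    subst hpc
    by_contra hch
    exact hcd.2 hpq (lt_of_le_of_ne hqd hch)
  subst hpc; subst hqd'
  obtain ⟨r', s', g1, g2, g3, g4, g5⟩ := main_transfer Hsup Hinf (latCon_isCon p q) hab.le hw p q
    le_rfl hpq.le le_rfl hne (latCon_self p q)
  have hr'a : r' = a := by
    by_contra hch
    exact hab.2 (lt_of_le_of_ne g1 (Ne.symm hch)) ((lt_of_le_of_ne g2 g4).trans_le g3)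
  have hs'b : s' = b := by
    subst hr'a
    by_contra hch
    exact hab.2 (lt_of_le_of_ne g2 g4) (lt_of_le_of_ne g3 hch)
  rw [← hr'a, ← hs'b]
  exact g5

end LatPrime
namespace LatPrime

variable {L : Type*} [Lattice L]

lemma exists_maximal_of_acc (hacc : ¬∃ f : ℕ → L, StrictMono f) (S : Set L)
    (hS : S.Nonempty) : ∃ m ∈ S, ∀ z ∈ S, ¬ m < z := by
  by_contra hcon
  push_neg at hcon
  have hstep : ∀ x : S, ∃ y : S, (x : L) < y := by
    intro ⟨x, hx⟩
    obtain ⟨z, hz1, hz2⟩ := hcon x hx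
    exact ⟨⟨z, hz1⟩, hz2⟩
  choose g hg using hstep
  obtain ⟨x0, hx0⟩ := hS
  let f : ℕ → S := fun n => Nat.rec (motive := fun _ => S) ⟨x0, hx0⟩ (fun _ x => g x) n
  have key : ∀ n, f (n + 1) = g (f n) := fun _ => rfl
  have key2 : ∀ n, (f n : L) < (f (n + 1) : L) := by
    intro n
    rw [key n]
    exact hg (f n)
  exact hacc ⟨fun n => (f n : L), strictMono_nat_of_lt_succ key2⟩

lemma exists_minimal_of_anti (hdcc : ¬∃ f : ℕ → L, StrictAnti f) (S : Set L)
    (hS : S.Nonempty) : ∃ m ∈ S, ∀ z ∈ S, ¬ z < m := by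
  by_contra hcon
  push_neg at hcon
  have hstep : ∀ x : S, ∃ y : S, (y : L) < x := by
    intro ⟨x, hx⟩
    obtain ⟨z, hz1, hz2⟩ := hcon x hx
    exact ⟨⟨z, hz1⟩, hz2⟩
  choose g hg using hstep
  obtain ⟨x0, hx0⟩ := hS
  let f : ℕ → S := fun n => Nat.rec (motive := fun _ => S) ⟨x0, hx0⟩ (fun _ x => g x) n
  have key : ∀ n, f (n + 1) = g (f n) := fun _ => rfl
  have key2 : ∀ n, (f (n + 1) : L) < (f n : L) := by
    intro n
    rw [key n]
    exact hg (f n)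
  exact hdcc ⟨fun n => (f n : L), strictAnti_nat_of_succ_lt key2⟩

lemma finite_no_strictMono [Finite L] : ¬∃ f : ℕ → L, StrictMono f := by
  rintro ⟨f, hf⟩
  obtain ⟨m, n, hmn, heq⟩ := Finite.exists_ne_map_eq_of_infinite f
  exact hmn (hf.injective heq)

lemma finite_no_strictAnti [Finite L] : ¬∃ f : ℕ → L, StrictAnti f := by
  rintro ⟨f, hf⟩
  obtain ⟨m, n, hmn, heq⟩ := Finite.exists_ne_map_eq_of_infinite f
  exact hmn (hf.injective heq)

/-- Every nontrivial congruence collapses a cover. -/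
lemma exists_cover_con (hacc : ¬∃ f : ℕ → L, StrictMono f) {ψ : L → L → Prop}
    (hψ : IsLatCon ψ) {x y : L} (hxy : ψ x y) (hne : x ≠ y) :
    ∃ c d, c ⋖ d ∧ ψ c d := by
  set u := x ⊓ y with hu
  set v := x ⊔ y with hv
  have huv : ψ u v := con_inf_sup hψ hxy
  have hne' : u < v := by
    rcases lt_or_eq_of_le (inf_le_sup : u ≤ v) with h | h
    · exact h
    · exact absurd (inf_eq_sup.1 h) hne
  obtain ⟨m, ⟨hm1, hm2⟩, hm3⟩ := exists_maximal_of_acc hacc {z | u ≤ z ∧ z < v} ⟨u, le_rfl, hne'⟩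
  refine ⟨m, v, ⟨hm2, fun z hz1 hz2 => hm3 z ⟨hm1.trans hz1.le, hz2⟩ hz1⟩, ?_⟩
  exact con_convex hψ huv hm1 hm2.le le_rfl

/-- In the finite case: a congruence collapsing all covers is everything (on `≤` pairs). -/
lemma fill_of_finite [Finite L] {ψ : L → L → Prop} (hψ : IsLatCon ψ)
    (hcov : ∀ c d : L, c ⋖ d → ψ c d) {x y : L} (hxy : x ≤ y) : ψ x y := by
  obtain ⟨m, ⟨hm1, hm2, hm3⟩, hmin⟩ := exists_minimal_of_anti finite_no_strictAnti
    {z | x ≤ z ∧ z ≤ y ∧ ψ z y} ⟨y, hxy, le_rfl, refl' hψ y⟩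
  rcases eq_or_lt_of_le hm1 with heq | hlt
  · rw [heq]; exact hm3
  · exfalso
    obtain ⟨w, ⟨hw1, hw2⟩, hwmax⟩ := exists_maximal_of_acc finite_no_strictMono
      {z | x ≤ z ∧ z < m} ⟨x, le_rfl, hlt⟩
    have hwm : w ⋖ m := ⟨hw2, fun z hz1 hz2 => hwmax z ⟨hw1.trans hz1.le, hz2⟩ hz1⟩
    have : ψ w y := trans' hψ (hcov w m hwm) hm3
    exact hmin w ⟨hw1, hw2.le.trans hm2, this⟩ hw2
    
/-- In the relatively complemented + ACC case: same conclusion. -/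
lemma fill_of_relCompl (hrc : ∀ a x b : L, a ≤ x → x ≤ b → ∃ y, x ⊓ y = a ∧ x ⊔ y = b)
    (hacc : ¬∃ f : ℕ → L, StrictMono f) {ψ : L → L → Prop} (hψ : IsLatCon ψ)
    (hcov : ∀ c d : L, c ⋖ d → ψ c d) {x y : L} (hxy : x ≤ y) : ψ x y := by
  obtain ⟨m, ⟨hm1, hm2, hm3⟩, hmax⟩ := exists_maximal_of_acc hacc
    {z | x ≤ z ∧ z ≤ y ∧ ψ x z} ⟨x, le_rfl, hxy, refl' hψ x⟩
  rcases eq_or_lt_of_le hm2 with heq | hlt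
  · rw [← heq]; exact hm3
  · exfalso
    obtain ⟨w, ⟨hw1, hw2⟩, hwmax⟩ := exists_maximal_of_acc hacc
      {z | m ≤ z ∧ z < y} ⟨m, le_rfl, hlt⟩
    have hwy : w ⋖ y := ⟨hw2, fun z hz1 hz2 => hwmax z ⟨hw1.trans hz1.le, hz2⟩ hz1⟩
    obtain ⟨c, hc1, hc2⟩ := hrc m w y hw1 hw2.le
    have hmc : m ≤ c := by rw [← hc1]; exact inf_le_right
    have hcy : c ≤ y := by rw [← hc2]; exact le_sup_right
    have h1 : ψ m c := by
      have := inf_const hψ c (hcov w y hwy)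
      rwa [hc1, inf_eq_right.2 hcy] at this
    have hcm : ¬ m < c := hmax c ⟨hm1.trans hmc, hcy, trans' hψ hm3 h1⟩
    have hmceq : m = c := by
      by_contra hch
      exact hcm (lt_of_le_of_ne hmc hch)
    rw [← hmceq, sup_eq_left.2 hw1] at hc2
    exact hw2.ne hc2

/-- The core theorem: under the step and fill hypotheses, a congruence that meets every
nontrivial congruence nontrivially and is itself nontrivial is everything. -/
lemma core (hacc : ¬∃ f : ℕ → L, StrictMono f) (Hsup : StepSup L) (Hinf : StepInf L)
    (Hfill : ∀ ψ : L → L → Prop, IsLatCon ψ → (∀ c d : L, c ⋖ d → ψ c d) →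
      ∀ x y : L, x ≤ y → ψ x y)
    (hprime : ∀ α β : L → L → Prop, IsLatCon α → IsLatCon β →
      (∀ a b, α a b → β a b → a = b) → (∀ a b, α a b → a = b) ∨ (∀ a b, β a b → a = b))
    {φ : L → L → Prop} (hφ : IsLatCon φ) {x₀ y₀ : L} (hx₀ : φ x₀ y₀) (hne₀ : x₀ ≠ y₀) :
    ∀ x y, φ x y := by
  obtain ⟨a, b, hab, hφab⟩ := exists_cover_con hacc hφ hx₀ hne₀
  have hcovall : ∀ c d : L, c ⋖ d → φ c d := by
    intro c d hcd
    have hnm : ¬ (∀ u v, latCon a b u v → latCon c d u v → u = v) := by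
      intro hmeet
      rcases hprime (latCon a b) (latCon c d) (latCon_isCon a b) (latCon_isCon c d) hmeet with
        h | h
      · exact hab.ne (h a b (latCon_self a b))
      · exact hcd.ne (h c d (latCon_self c d))
    push_neg at hnm
    obtain ⟨u, v, h1, h2, huv⟩ := hnm
    have hρ : IsLatCon (fun z w => latCon a b z w ∧ latCon c d z w) :=
      meet_isCon (latCon_isCon a b) (latCon_isCon c d)
    obtain ⟨e, f, hef, ⟨hef1, hef2⟩⟩ := exists_cover_con hacc hρ (x := u) (y := v) ⟨h1, h2⟩ huv
    -- `latCon e f ⊆ φ`, since `φ e f` via `latCon a b e f ⊆ φ` (as `φ a b`).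
    have hφef : φ e f := hef1 φ hφ hφab
    have hsym : latCon e f c d := cover_sym Hsup Hinf hcd hef hef2
    exact hsym φ hφ hφef
  intro x y
  have h1 : φ x (x ⊔ y) := Hfill φ hφ hcovall x (x ⊔ y) le_sup_left
  have h2 : φ y (x ⊔ y) := Hfill φ hφ hcovall y (x ⊔ y) le_sup_right
  exact trans' hφ h1 (symm' hφ h2)

end LatPrime
namespace LatPrime

section Quot

variable {L : Type*} [Lattice L] (θ : L → L → Prop) (hθ : IsLatCon θ)

def conSetoid : Setoid L := ⟨θ, hθ.1⟩

def ConQuot := Quotient (conSetoid θ hθ)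

def qmk : L → ConQuot θ hθ := Quotient.mk (conSetoid θ hθ)

instance qMax : Max (ConQuot θ hθ) :=
  ⟨Quotient.map₂ (· ⊔ ·) (fun a a' ha b b' hb => hθ.2.1 a a' b b' ha hb)⟩

instance qMin : Min (ConQuot θ hθ) :=
  ⟨Quotient.map₂ (· ⊓ ·) (fun a a' ha b b' hb => hθ.2.2 a a' b b' ha hb)⟩

lemma qmk_sup (a b : L) : qmk θ hθ a ⊔ qmk θ hθ b = qmk θ hθ (a ⊔ b) := rfl

lemma qmk_inf (a b : L) : qmk θ hθ a ⊓ qmk θ hθ b = qmk θ hθ (a ⊓ b) := rfl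

lemma qmk_eq {a b : L} : qmk θ hθ a = qmk θ hθ b ↔ θ a b :=
  ⟨fun h => Quotient.exact (s := conSetoid θ hθ) h,
    fun h => Quotient.sound (s := conSetoid θ hθ) h⟩

lemma qmk_surj : Function.Surjective (qmk θ hθ) := Quotient.exists_rep

instance qLattice : Lattice (ConQuot θ hθ) := by
  refine Lattice.mk' ?_ ?_ ?_ ?_ ?_ ?_
  · intro A B
    induction A using Quotient.ind
    induction B using Quotient.ind
    rename_i a b
    show qmk θ hθ a ⊔ qmk θ hθ b = qmk θ hθ b ⊔ qmk θ hθ a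
    rw [qmk_sup, qmk_sup, sup_comm]
  · intro A B C
    induction A using Quotient.ind
    induction B using Quotient.ind
    induction C using Quotient.ind
    rename_i a b c
    show qmk θ hθ a ⊔ qmk θ hθ b ⊔ qmk θ hθ c = qmk θ hθ a ⊔ (qmk θ hθ b ⊔ qmk θ hθ c)
    rw [qmk_sup, qmk_sup, qmk_sup, qmk_sup, sup_assoc]
  · intro A B
    induction A using Quotient.ind
    induction B using Quotient.ind
    rename_i a b
    show qmk θ hθ a ⊓ qmk θ hθ b = qmk θ hθ b ⊓ qmk θ hθ a
    rw [qmk_inf, qmk_inf, inf_comm]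
  · intro A B C
    induction A using Quotient.ind
    induction B using Quotient.ind
    induction C using Quotient.ind
    rename_i a b c
    show qmk θ hθ a ⊓ qmk θ hθ b ⊓ qmk θ hθ c = qmk θ hθ a ⊓ (qmk θ hθ b ⊓ qmk θ hθ c)
    rw [qmk_inf, qmk_inf, qmk_inf, qmk_inf, inf_assoc]
  · intro A B
    induction A using Quotient.ind
    induction B using Quotient.ind
    rename_i a b
    show qmk θ hθ a ⊔ qmk θ hθ a ⊓ qmk θ hθ b = qmk θ hθ a
    rw [qmk_inf, qmk_sup, sup_inf_self]
  · intro A B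
    induction A using Quotient.ind
    induction B using Quotient.ind
    rename_i a b
    show qmk θ hθ a ⊓ (qmk θ hθ a ⊔ qmk θ hθ b) = qmk θ hθ a
    rw [qmk_sup, qmk_inf, inf_sup_self]

lemma qmk_le {a b : L} : qmk θ hθ a ≤ qmk θ hθ b ↔ θ (a ⊔ b) b := by
  rw [← sup_eq_right]; erw [qmk_sup, qmk_eq]

lemma qmk_mono {a b : L} (h : a ≤ b) : qmk θ hθ a ≤ qmk θ hθ b :=
  (qmk_le θ hθ).2 (by rw [sup_eq_right.2 h]; exact refl' hθ b)

lemma qModular [IsModularLattice L] : IsModularLattice (ConQuot θ hθ) := by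
  constructor
  intro X Y Z hXZ
  induction X using Quotient.ind
  induction Y using Quotient.ind
  induction Z using Quotient.ind
  rename_i x y z
  have hz' : qmk θ hθ z = qmk θ hθ (x ⊔ z) := by
    rw [← qmk_sup]
    exact (sup_eq_right.2 hXZ).symm
  show (qmk θ hθ x ⊔ qmk θ hθ y) ⊓ qmk θ hθ z ≤ qmk θ hθ x ⊔ qmk θ hθ y ⊓ qmk θ hθ z
  rw [hz', qmk_sup, qmk_inf, qmk_inf, qmk_sup]
  apply le_of_eq
  rw [qmk_eq] at *
  rw [sup_inf_assoc_of_le y (le_sup_left : x ≤ x ⊔ z)]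
  exact refl' hθ _

lemma qRelCompl (hrc : ∀ a x b : L, a ≤ x → x ≤ b → ∃ y, x ⊓ y = a ∧ x ⊔ y = b) :
    ∀ A X B : ConQuot θ hθ, A ≤ X → X ≤ B → ∃ Y, X ⊓ Y = A ∧ X ⊔ Y = B := by
  intro A X B hAX hXB
  induction A using Quotient.ind
  induction X using Quotient.ind
  induction B using Quotient.ind
  rename_i a x b
  have ha' : qmk θ hθ (a ⊓ x) = qmk θ hθ a := by
    rw [← qmk_inf]
    exact inf_eq_left.2 hAX
  have hb' : qmk θ hθ (b ⊔ x) = qmk θ hθ b := by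
    rw [← qmk_sup]; erw [sup_comm]
    exact sup_eq_right.2 hXB
  obtain ⟨y, hy1, hy2⟩ := hrc (a ⊓ x) x (b ⊔ x) inf_le_right le_sup_right
  refine ⟨qmk θ hθ y, ?_, ?_⟩
  · show qmk θ hθ x ⊓ qmk θ hθ y = qmk θ hθ a
    rw [qmk_inf, hy1, ha']
  · show qmk θ hθ x ⊔ qmk θ hθ y = qmk θ hθ b
    rw [qmk_sup, hy2, hb']

lemma qAcc (hacc : ¬∃ f : ℕ → L, StrictMono f) :
    ¬∃ f : ℕ → ConQuot θ hθ, StrictMono f := by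
  rintro ⟨f, hf⟩
  let g : ℕ → L := fun n =>
    Nat.rec (motive := fun _ => L) (f 0).out (fun n x => x ⊔ (f (n + 1)).out) n
  have hg1 : ∀ n, g (n + 1) = g n ⊔ (f (n + 1)).out := fun _ => rfl
  have hrep : ∀ n, qmk θ hθ (g n) = f n := by
    intro n
    induction n with
    | zero => exact Quotient.out_eq (f 0)
    | succ n ih =>
        rw [hg1 n, ← qmk_sup, ih]
        have : qmk θ hθ (f (n + 1)).out = f (n + 1) := Quotient.out_eq _
        rw [this]
        exact sup_eq_right.2 (hf (Nat.lt_succ_self n)).le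
  have hgmono : StrictMono g := by
    refine strictMono_nat_of_lt_succ (fun n => ?_)
    rw [hg1 n]
    refine lt_of_le_of_ne le_sup_left (fun hch => ?_)
    have : f n = f (n + 1) := by
      rw [← hrep n, ← hrep (n + 1), hg1 n, ← hch]
    exact (hf (Nat.lt_succ_self n)).ne this
  exact hacc ⟨g, hgmono⟩

def pullCon (ρ : ConQuot θ hθ → ConQuot θ hθ → Prop) : L → L → Prop :=
  fun a b => ρ (qmk θ hθ a) (qmk θ hθ b)

lemma pullCon_isCon {ρ : ConQuot θ hθ → ConQuot θ hθ → Prop} (hρ : IsLatCon ρ) :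
    IsLatCon (pullCon θ hθ ρ) := by
  refine ⟨⟨fun a => refl' hρ _, fun h => symm' hρ h, fun h1 h2 => trans' hρ h1 h2⟩, ?_, ?_⟩
  · intro a b c d h1 h2
    have := hρ.2.1 _ _ _ _ h1 h2
    unfold pullCon
    erw [qmk_sup, qmk_sup] at this; exact this
  · intro a b c d h1 h2
    have := hρ.2.2 _ _ _ _ h1 h2
    unfold pullCon
    erw [qmk_inf, qmk_inf] at this; exact this

variable {θ} in
def pushCon (φ : L → L → Prop) (hφ : IsLatCon φ) (hsub : ∀ a b, θ a b → φ a b) :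
    ConQuot θ hθ → ConQuot θ hθ → Prop :=
  Quotient.lift₂ φ (by
    intro a b a' b' ha hb
    have ha' : φ a a' := hsub _ _ ha
    have hb' : φ b b' := hsub _ _ hb
    exact propext ⟨fun h => trans' hφ (symm' hφ ha') (trans' hφ h hb'),
      fun h => trans' hφ ha' (trans' hφ h (symm' hφ hb'))⟩)

variable {θ} in
lemma pushCon_mk {φ : L → L → Prop} (hφ : IsLatCon φ) (hsub : ∀ a b, θ a b → φ a b)
    (a b : L) : pushCon hθ φ hφ hsub (qmk θ hθ a) (qmk θ hθ b) = φ a b := rfl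

variable {θ} in
lemma pushCon_isCon {φ : L → L → Prop} (hφ : IsLatCon φ) (hsub : ∀ a b, θ a b → φ a b) :
    IsLatCon (pushCon hθ φ hφ hsub) := by
  refine ⟨⟨?_, ?_, ?_⟩, ?_, ?_⟩
  · intro A
    induction A using Quotient.ind
    exact refl' hφ _
  · intro A B h
    induction A using Quotient.ind
    induction B using Quotient.ind
    exact symm' hφ h
  · intro A B C h1 h2
    induction A using Quotient.ind
    induction B using Quotient.ind
    induction C using Quotient.ind
    exact trans' hφ h1 h2
  · intro A B C D h1 h2
    induction A using Quotient.ind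
    induction B using Quotient.ind
    induction C using Quotient.ind
    induction D using Quotient.ind
    rename_i a b c d
    show pushCon hθ φ hφ hsub (qmk θ hθ a ⊔ qmk θ hθ c) (qmk θ hθ b ⊔ qmk θ hθ d)
    rw [qmk_sup, qmk_sup, pushCon_mk]
    exact hφ.2.1 _ _ _ _ h1 h2
  · intro A B C D h1 h2
    induction A using Quotient.ind
    induction B using Quotient.ind
    induction C using Quotient.ind
    induction D using Quotient.ind
    rename_i a b c d
    show pushCon hθ φ hφ hsub (qmk θ hθ a ⊓ qmk θ hθ c) (qmk θ hθ b ⊓ qmk θ hθ d)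
    rw [qmk_inf, qmk_inf, pushCon_mk]
    exact hφ.2.2 _ _ _ _ h1 h2

end Quot

end LatPrime


open LatPrime in
/-- In a lattice which is finite and modular, or relatively complemented
and satisfying the ascending chain condition, a congruence is prime iff it is maximal. -/
theorem primeCon_iff_maxCon_of_modular_or_relCompl {L : Type*} [Lattice L]
    (h : (Finite L ∧ IsModularLattice L) ∨
      ((∀ a x b : L, a ≤ x → x ≤ b → ∃ y, x ⊓ y = a ∧ x ⊔ y = b) ∧
        ¬∃ f : ℕ → L, StrictMono f)) :
    ∀ θ : L → L → Prop, IsPrimeCon θ ↔ IsMaxCon θ := by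

  intro θ
  constructor
  · rintro ⟨hθ, hproper, hprime⟩
    refine ⟨hθ, hproper, ?_⟩
    intro φ hφ hsub
    by_cases heq : ∀ a b, φ a b ↔ θ a b
    · exact Or.inl (funext fun a => funext fun b => propext (heq a b))
    · right
      push_neg at heq
      obtain ⟨a₀, b₀, hne⟩ := heq
      obtain ⟨hφw, hnθ⟩ : φ a₀ b₀ ∧ ¬ θ a₀ b₀ := by
        rcases hne with h1 | ⟨hnφ, hθw⟩
        · exact h1
        · exact absurd (hsub _ _ hθw) hnφ
      have hQprime : ∀ α β : ConQuot θ hθ → ConQuot θ hθ → Prop, IsLatCon α → IsLatCon β →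
          (∀ A B, α A B → β A B → A = B) →
          (∀ A B, α A B → A = B) ∨ (∀ A B, β A B → A = B) := by
        intro α β hα hβ hmeet
        have hmeet' : ∀ a b, pullCon θ hθ α a b → pullCon θ hθ β a b → θ a b := by
          intro a b h1 h2
          exact (qmk_eq θ hθ).1 (hmeet _ _ h1 h2)
        rcases hprime _ _ (pullCon_isCon θ hθ hα) (pullCon_isCon θ hθ hβ) hmeet' with hh | hh
        · left
          intro A B
          induction A using Quotient.ind
          induction B using Quotient.ind
          rename_i a b
          exact fun hab => (qmk_eq θ hθ).2 (hh a b hab)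
        · right
          intro A B
          induction A using Quotient.ind
          induction B using Quotient.ind
          rename_i a b
          exact fun hab => (qmk_eq θ hθ).2 (hh a b hab)
      have hΦ : IsLatCon (pushCon hθ φ hφ hsub) := pushCon_isCon hθ hφ hsub
      have hΦw : pushCon hθ φ hφ hsub (qmk θ hθ a₀) (qmk θ hθ b₀) := by
        rw [pushCon_mk]
        exact hφw
      have hΦne : qmk θ hθ a₀ ≠ qmk θ hθ b₀ := fun hc => hnθ ((qmk_eq θ hθ).1 hc)
      have hall : ∀ X Y : ConQuot θ hθ, pushCon hθ φ hφ hsub X Y := by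
        rcases h with ⟨hfin, hmod⟩ | ⟨hrc, hacc⟩
        · haveI : Finite (ConQuot θ hθ) := Quotient.finite _
          haveI : IsModularLattice (ConQuot θ hθ) := qModular θ hθ
          exact core finite_no_strictMono stepSup_modular stepInf_modular
            (fun ψ hψ hcov x y hxy => fill_of_finite hψ hcov hxy) hQprime hΦ hΦw hΦne
        · exact core (qAcc θ hθ hacc) (stepSup_relCompl (qRelCompl θ hθ hrc))
            (stepInf_relCompl (qRelCompl θ hθ hrc))
            (fun ψ hψ hcov x y hxy =>
              fill_of_relCompl (qRelCompl θ hθ hrc) (qAcc θ hθ hacc) hψ hcov hxy)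
            hQprime hΦ hΦw hΦne
      funext x y
      refine eq_true ?_
      have := hall (qmk θ hθ x) (qmk θ hθ y)
      rwa [pushCon_mk] at this
  · exact fun hm => maxCon_isPrimeCon hm
end

section
/- Let L and M be bounded distributive lattices and h : L → M a bounded lattice homomorphism (preserving ⊔, ⊓, the least element 0 and the greatest element 1). Then for every prime congruence ψ of M, h*(ψ) is a prime congruence of L, and for every maximal congruence ψ of M, h*(ψ) is a maximal congruence of L. -/
section Helpers

variable {L : Type*}

/-- A congruence relating `⊥` and `⊤` is total. -/
lemma con_total_of_bot_top [Lattice L] [BoundedOrder L] {θ : L → L → Prop}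
    (hθ : IsLatCon θ) (hbt : θ ⊥ ⊤) : ∀ x y, θ x y := by
  obtain ⟨he, hs, hi⟩ := hθ
  intro x y
  have hx : θ x ⊤ := by simpa using hs x x ⊥ ⊤ (he.refl x) hbt
  have hy : θ y ⊤ := by simpa using hs y y ⊥ ⊤ (he.refl y) hbt
  exact he.trans hx (he.symm hy)

/-- A congruence relating the endpoints of an interval relates everything in it. -/
lemma con_interval [Lattice L] {θ : L → L → Prop} (hθ : IsLatCon θ)
    {u v x y : L} (huv : θ u v) (h1 : u ≤ x) (h2 : x ≤ v) (h3 : u ≤ y) (h4 : y ≤ v) :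
    θ x y := by
  obtain ⟨he, hs, hi⟩ := hθ
  have hx : θ u x := by
    have := hi x x u v (he.refl x) huv
    rwa [inf_eq_right.2 h1, inf_eq_left.2 h2] at this
  have hy : θ u y := by
    have := hi y y u v (he.refl y) huv
    rwa [inf_eq_right.2 h3, inf_eq_left.2 h4] at this
  exact he.trans (he.symm hx) hy

lemma con_inf_sup [Lattice L] {θ : L → L → Prop} (hθ : IsLatCon θ)
    {a b : L} (hab : θ a b) : θ (a ⊓ b) (a ⊔ b) := by
  obtain ⟨he, hs, hi⟩ := hθ
  have h1 : θ (a ⊓ b) b := by simpa using hi a b b b hab (he.refl b)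
  have h2 : θ (a ⊔ b) b := by simpa using hs a b b b hab (he.refl b)
  exact he.trans h1 (he.symm h2)

/-- Key distributive-lattice lemma: if `θ p q`, `x ⊓ p = y ⊓ p` and `x ⊔ q = y ⊔ q`
then `θ x y`. -/
lemma con_of_inf_sup_eq [DistribLattice L] {θ : L → L → Prop} (hθ : IsLatCon θ)
    {p q x y : L} (hpq : θ p q) (hxp : x ⊓ p = y ⊓ p) (hxq : x ⊔ q = y ⊔ q) :
    θ x y := by
  obtain ⟨he, hs, hi⟩ := hθ
  have h1 : θ (x ⊔ y ⊓ p) (x ⊔ y ⊓ q) :=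
    hs _ _ _ _ (he.refl x) (hi _ _ _ _ (he.refl y) hpq)
  have e1 : x ⊔ y ⊓ p = x := by rw [← hxp]; exact sup_eq_left.2 inf_le_left
  have h2 : θ (y ⊔ x ⊓ p) (y ⊔ x ⊓ q) :=
    hs _ _ _ _ (he.refl y) (hi _ _ _ _ (he.refl x) hpq)
  have e2 : y ⊔ x ⊓ p = y := by rw [hxp]; exact sup_eq_left.2 inf_le_left
  have e3 : x ⊔ y ⊓ q = y ⊔ x ⊓ q := by
    rw [sup_inf_left, sup_inf_left, hxq, sup_comm x y]
  rw [e1] at h1; rw [e2] at h2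
  rw [e3] at h1
  exact he.trans h1 (he.symm h2)

/-- The formula congruence for a pair `(c,d)` in a distributive lattice. -/
lemma conFormula_isLatCon [DistribLattice L] (c d : L) :
    IsLatCon (fun x y : L => x ⊓ c = y ⊓ c ∧ x ⊔ d = y ⊔ d) := by
  refine ⟨⟨fun x => ⟨rfl, rfl⟩, fun h => ⟨h.1.symm, h.2.symm⟩,
    fun h1 h2 => ⟨h1.1.trans h2.1, h1.2.trans h2.2⟩⟩, ?_, ?_⟩
  · rintro a b u v ⟨h1, h2⟩ ⟨h3, h4⟩
    constructor
    · rw [inf_sup_right, inf_sup_right, h1, h3]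
    · rw [sup_sup_distrib_right a u d, h2, h4, ← sup_sup_distrib_right]
  · rintro a b u v ⟨h1, h2⟩ ⟨h3, h4⟩
    constructor
    · rw [inf_inf_distrib_right a u c, h1, h3, ← inf_inf_distrib_right]
    · rw [sup_inf_right, sup_inf_right, h2, h4]

lemma pullback_isLatCon [Lattice L] {M : Type*} [Lattice M] (h : L → M)
    (hsup : ∀ a b, h (a ⊔ b) = h a ⊔ h b) (hinf : ∀ a b, h (a ⊓ b) = h a ⊓ h b)
    {ψ : M → M → Prop} (hψ : IsLatCon ψ) :
    IsLatCon (fun a b : L => ψ (h a) (h b)) := by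
  obtain ⟨he, hs, hi⟩ := hψ
  refine ⟨⟨fun x => he.refl _, fun hxy => he.symm hxy, fun h1 h2 => he.trans h1 h2⟩, ?_, ?_⟩
  · intro a b c d h1 h2
    simp only [hsup]
    exact hs _ _ _ _ h1 h2
  · intro a b c d h1 h2
    simp only [hinf]
    exact hi _ _ _ _ h1 h2

end Helpers

/-- For a bounded lattice homomorphism between bounded distributive
lattices, the pullback of a prime congruence is prime and the pullback of a maximal
congruence is maximal. -/
theorem pullback_primeCon_maxCon_boundedDistrib {L M : Type*}
    [DistribLattice L] [BoundedOrder L] [DistribLattice M] [BoundedOrder M] (h : L → M)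
    (hsup : ∀ a b, h (a ⊔ b) = h a ⊔ h b) (hinf : ∀ a b, h (a ⊓ b) = h a ⊓ h b)
    (hbot : h ⊥ = ⊥) (htop : h ⊤ = ⊤) :
    (∀ ψ : M → M → Prop, IsPrimeCon ψ → IsPrimeCon (fun a b : L => ψ (h a) (h b))) ∧
    (∀ ψ : M → M → Prop, IsMaxCon ψ → IsMaxCon (fun a b : L => ψ (h a) (h b))) := by
  -- auxiliary facts, common to both parts
  have mono : ∀ {a b : L}, a ≤ b → h a ≤ h b := by
    intro a b hab
    have := hinf a b
    rw [inf_eq_left.2 hab] at this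
    exact this ▸ inf_le_right
  have notTotal : ∀ {ψ : M → M → Prop}, IsLatCon ψ → ψ ≠ (fun _ _ => True) →
      (fun a b : L => ψ (h a) (h b)) ≠ (fun _ _ => True) := by
    intro ψ hψ hproper hc
    apply hproper
    have hbt : ψ ⊥ ⊤ := by
      have := congrFun (congrFun hc (⊥ : L)) (⊤ : L)
      rw [hbot, htop] at this
      exact this ▸ trivial
    funext x y
    exact eq_true (con_total_of_bot_top hψ hbt x y)
  have pullNot : ∀ {ψ : M → M → Prop}, IsLatCon ψ → ∀ {a b : L},
      ¬ ψ (h a) (h b) → ¬ ψ (h (a ⊓ b)) (h (a ⊔ b)) := by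
    intro ψ hψ a b hnab hc
    rw [hinf, hsup] at hc
    exact hnab (con_interval hψ hc inf_le_left le_sup_left inf_le_right le_sup_right)
  constructor
  · -- prime part
    rintro ψ ⟨hψ, hproper, hprime⟩
    refine ⟨pullback_isLatCon h hsup hinf hψ, notTotal hψ hproper, ?_⟩
    intro α β hα hβ hαβ
    by_cases hA : ∀ a b, α a b → ψ (h a) (h b)
    · exact Or.inl hA
    by_cases hB : ∀ a b, β a b → ψ (h a) (h b)
    · exact Or.inr hB
    exfalso
    push_neg at hA hB
    obtain ⟨a, b, hab, hnab⟩ := hA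
    obtain ⟨c, d, hcd, hncd⟩ := hB
    -- normalize to comparable pairs
    set a1 := a ⊓ b with ha1
    set b1 := a ⊔ b with hb1
    set c1 := c ⊓ d with hc1
    set d1 := c ⊔ d with hd1
    have hab1 : α a1 b1 := con_inf_sup hα hab
    have hcd1 : β c1 d1 := con_inf_sup hβ hcd
    have hnab1 : ¬ ψ (h a1) (h b1) := pullNot hψ hnab
    have hncd1 : ¬ ψ (h c1) (h d1) := pullNot hψ hncd
    have hle1 : h a1 ≤ h b1 := mono inf_le_sup
    have hle2 : h c1 ≤ h d1 := mono inf_le_sup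
    -- the pair generating the meet of the principal congruences
    have hpair_α : α ((a1 ⊔ c1) ⊓ (b1 ⊓ d1)) (b1 ⊓ d1) := by
      obtain ⟨hae, has, hai⟩ := hα
      have := hai _ _ _ _ (has _ _ _ _ hab1 (hae.refl c1)) (hae.refl (b1 ⊓ d1))
      rwa [inf_eq_right.2 (show b1 ⊓ d1 ≤ b1 ⊔ c1 from inf_le_left.trans le_sup_left)] at this
    have hpair_β : β ((a1 ⊔ c1) ⊓ (b1 ⊓ d1)) (b1 ⊓ d1) := by
      obtain ⟨hbe, hbs, hbi⟩ := hβ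
      have := hbi _ _ _ _ (hbs _ _ _ _ (hbe.refl a1) hcd1) (hbe.refl (b1 ⊓ d1))
      rwa [inf_eq_right.2 (show b1 ⊓ d1 ≤ a1 ⊔ d1 from inf_le_right.trans le_sup_right)] at this
    have hpq : ψ ((h a1 ⊔ h c1) ⊓ (h b1 ⊓ h d1)) (h b1 ⊓ h d1) := by
      have h0 : ψ (h ((a1 ⊔ c1) ⊓ (b1 ⊓ d1))) (h (b1 ⊓ d1)) := hαβ _ _ hpair_α hpair_β
      rwa [hinf (a1 ⊔ c1) (b1 ⊓ d1), hsup a1 c1, hinf b1 d1] at h0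
    -- apply primality of ψ to the two formula congruences
    have hkey : ∀ x y : M, (x ⊓ h a1 = y ⊓ h a1 ∧ x ⊔ h b1 = y ⊔ h b1) →
        (x ⊓ h c1 = y ⊓ h c1 ∧ x ⊔ h d1 = y ⊔ h d1) → ψ x y := by
      rintro x y ⟨hx1, hx2⟩ ⟨hx3, hx4⟩
      apply con_of_inf_sup_eq hψ hpq
      · have e : x ⊓ (h a1 ⊔ h c1) = y ⊓ (h a1 ⊔ h c1) := by
          rw [inf_sup_left, inf_sup_left, hx1, hx3]
        have ha : ∀ z : M, z ⊓ ((h a1 ⊔ h c1) ⊓ (h b1 ⊓ h d1)) =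
            (z ⊓ (h a1 ⊔ h c1)) ⊓ (h b1 ⊓ h d1) := fun z => (inf_assoc _ _ _).symm
        rw [ha, ha, e]
      · rw [sup_inf_left, sup_inf_left, hx2, hx4]
    rcases hprime (fun x y => x ⊓ h a1 = y ⊓ h a1 ∧ x ⊔ h b1 = y ⊔ h b1)
        (fun x y => x ⊓ h c1 = y ⊓ h c1 ∧ x ⊔ h d1 = y ⊔ h d1)
        (conFormula_isLatCon _ _) (conFormula_isLatCon _ _) hkey with hc | hc
    · exact hnab1 (hc _ _ ⟨by rw [inf_idem, inf_eq_right.2 hle1],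
        by rw [sup_idem, sup_eq_right.2 hle1]⟩)
    · exact hncd1 (hc _ _ ⟨by rw [inf_idem, inf_eq_right.2 hle2],
        by rw [sup_idem, sup_eq_right.2 hle2]⟩)
  · -- maximal part
    rintro ψ ⟨hψ, hproper, hmax⟩
    refine ⟨pullback_isLatCon h hsup hinf hψ, notTotal hψ hproper, ?_⟩
    intro φ hφ hsub
    by_cases hφψ : φ = fun a b : L => ψ (h a) (h b)
    · exact Or.inl hφψ
    right
    obtain ⟨he, hs, hi⟩ := hψ
    have hψc : IsLatCon ψ := ⟨he, hs, hi⟩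
    have hex : ∃ a b, φ a b ∧ ¬ ψ (h a) (h b) := by
      by_contra hco
      push_neg at hco
      apply hφψ
      funext a b
      exact propext ⟨hco a b, hsub a b⟩
    obtain ⟨a, b, hab, hnab⟩ := hex
    set a1 := a ⊓ b with ha1
    set b1 := a ⊔ b with hb1
    have hab1 : φ a1 b1 := con_inf_sup hφ hab
    have hnab1 : ¬ ψ (h a1) (h b1) := pullNot hψc hnab
    have hle1 : h a1 ≤ h b1 := mono inf_le_sup
    -- the congruence generated by ψ and (h a1, h b1)
    set Φ : M → M → Prop :=
      fun x y => ψ (x ⊓ h a1) (y ⊓ h a1) ∧ ψ (x ⊔ h b1) (y ⊔ h b1) with hΦ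
    have hΦcon : IsLatCon Φ := by
      refine ⟨⟨fun x => ⟨he.refl _, he.refl _⟩, fun hxy => ⟨he.symm hxy.1, he.symm hxy.2⟩,
        fun h1 h2 => ⟨he.trans h1.1 h2.1, he.trans h1.2 h2.2⟩⟩, ?_, ?_⟩
      · rintro x y u v ⟨h1, h2⟩ ⟨h3, h4⟩
        constructor
        · rw [inf_sup_right, inf_sup_right]
          exact hs _ _ _ _ h1 h3
        · rw [sup_sup_distrib_right x u (h b1), sup_sup_distrib_right y v (h b1)]
          exact hs _ _ _ _ h2 h4
      · rintro x y u v ⟨h1, h2⟩ ⟨h3, h4⟩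
        constructor
        · rw [inf_inf_distrib_right x u (h a1), inf_inf_distrib_right y v (h a1)]
          exact hi _ _ _ _ h1 h3
        · rw [sup_inf_right, sup_inf_right]
          exact hi _ _ _ _ h2 h4
    have hΦsup : ∀ x y, ψ x y → Φ x y :=
      fun x y hxy => ⟨hi _ _ _ _ hxy (he.refl _), hs _ _ _ _ hxy (he.refl _)⟩
    rcases hmax Φ hΦcon hΦsup with hc | hc
    · exfalso
      have hΦab : Φ (h a1) (h b1) := by
        constructor
        · rw [inf_idem, inf_eq_right.2 hle1]
          exact he.refl _
        · rw [sup_idem, sup_eq_right.2 hle1]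
          exact he.refl _
      rw [hc] at hΦab
      exact hnab1 hΦab
    · have hΦbt : Φ ⊥ ⊤ := by rw [hc]; trivial
      obtain ⟨h1, h2⟩ := hΦbt
      rw [bot_inf_eq, top_inf_eq] at h1
      rw [bot_sup_eq, top_sup_eq] at h2
      -- h1 : ψ ⊥ (h a1), h2 : ψ (h b1) ⊤
      have hφbot : φ ⊥ a1 := by
        apply hsub
        rw [hbot]
        exact h1
      have hφtop : φ b1 ⊤ := by
        apply hsub
        rw [htop]
        exact h2
      obtain ⟨hfe, hfs, hfi⟩ := hφ
      have hφbt : φ ⊥ ⊤ := hfe.trans hφbot (hfe.trans hab1 hφtop)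
      funext x y
      exact eq_true (con_total_of_bot_top ⟨hfe, hfs, hfi⟩ hφbt x y)
end
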